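/- arXiv:1909.11759 — 6 statements merged into one kernel-verified Lean document; each statement's English description precedes it below -/
import Mathlib

section
/- Let u_m, u_n : ℝ → ℂ be integrable and square-integrable with u_m not almost everywhere zero, let w_m ≠ 0, w_n ≠ 0, and let ω_m ≠ ω_n be real numbers. For η > 0 define T̂_j^η(k) = (1/(η|w_j|)) · û_j(k/(η w_j)) for j = m, n. Then the ratio [ ∫_ℝ |T̂_m^η(k − ω_m)| · |T̂_n^η(k − ω_n)| dk ] / [ ∫_ℝ |T̂_m^η(k − ω_m)|² dk ] tends to 0 as η → 0⁺. -/
open MeasureTheory Filter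
open scoped Topology ENNReal

/-- Fourier transform with the convention `û(k) = (1/√(2π)) ∫ u(x) e^{-ikx} dx`. -/
noncomputable def ft (u : ℝ → ℂ) (k : ℝ) : ℂ :=
  (1 / Real.sqrt (2 * Real.pi) : ℝ) *
    ∫ x : ℝ, u x * Complex.exp (-(Complex.I * (k : ℂ) * (x : ℂ)))

/-- The unnormalized transform `∫ u(x) e^{-ikx} dx`. -/
noncomputable def Sft (u : ℝ → ℂ) (k : ℝ) : ℂ :=
  ∫ x : ℝ, u x * Complex.exp (-(Complex.I * (k : ℂ) * (x : ℂ)))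

lemma ft_eq_Sft (u : ℝ → ℂ) (k : ℝ) :
    ft u k = ((1 / Real.sqrt (2 * Real.pi) : ℝ) : ℂ) * Sft u k := rfl

open Complex in
lemma Sft_eq (u : ℝ → ℂ) (k : ℝ) :
    Sft u k = FourierTransform.fourier u (k / (2 * Real.pi)) := by
  rw [Sft, Real.fourier_real_eq_integral_exp_smul]
  refine integral_congr_ae (Filter.Eventually.of_forall fun v => ?_)
  simp only [smul_eq_mul]
  rw [mul_comm]
  congr 1
  congr 1
  have hπ : (Real.pi : ℂ) ≠ 0 := Complex.ofReal_ne_zero.2 Real.pi_ne_zero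
  push_cast
  field_simp

lemma Sft_continuous (u : ℝ → ℂ) (hu : Integrable u) : Continuous (Sft u) := by
  have h : Continuous (FourierTransform.fourier u : ℝ → ℂ) :=
    VectorFourier.fourierIntegral_continuous (L := innerₗ ℝ) Real.continuous_fourierChar
      (by simp; fun_prop) hu
  have : Continuous fun k : ℝ => FourierTransform.fourier u (k / (2 * Real.pi)) :=
    h.comp (continuous_id.div_const _)
  exact continuous_congr (fun k => (Sft_eq u k).symm) |>.mp this

lemma Sft_tendsto_cocompact (u : ℝ → ℂ) :
    Tendsto (Sft u) (cocompact ℝ) (𝓝 0) := by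
  have h2π : (0:ℝ) < 2 * Real.pi := by positivity
  have hdiv : Tendsto (fun k : ℝ => k / (2 * Real.pi)) (cocompact ℝ) (cocompact ℝ) := by
    have h0 : Tendsto (fun k : ℝ => ‖k‖ * (2 * Real.pi)⁻¹) (cocompact ℝ) atTop :=
      (tendsto_norm_cocompact_atTop).atTop_mul_const (by positivity)
    have h1 : Tendsto (fun k : ℝ => ‖k / (2 * Real.pi)‖) (cocompact ℝ) atTop := by
      refine h0.congr fun k => ?_
      rw [norm_div, Real.norm_eq_abs (2 * Real.pi), abs_of_pos h2π, div_eq_mul_inv]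
    have h2 := tendsto_norm_atTop_iff_cobounded.mp h1
    rwa [Metric.cobounded_eq_cocompact] at h2
  have := (Real.zero_at_infty_fourier u).comp hdiv
  exact this.congr fun k => (Sft_eq u k).symm

lemma norm_Sft_le (u : ℝ → ℂ) (k : ℝ) : ‖Sft u k‖ ≤ ∫ x : ℝ, ‖u x‖ := by
  refine (norm_integral_le_integral_norm _).trans_eq ?_
  refine integral_congr_ae (Filter.Eventually.of_forall fun x => ?_)
  simp [norm_mul, Complex.norm_exp]

open Complex in
/-- Key Gaussian-smoothed Plancherel-type bound. -/
lemma gaussian_smoothed_bound (u : ℝ → ℂ) (hu1 : Integrable u)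
    (hu2 : MemLp u 2 (volume : Measure ℝ)) {b : ℝ} (hb : 0 < b) :
    ∫ k : ℝ, Real.exp (-b * k ^ 2) * ‖Sft u k‖ ^ 2
      ≤ 2 * Real.pi * ∫ x : ℝ, ‖u x‖ ^ 2 := by
  have hπ := Real.pi_pos
  set q : ℝ → ℝ := fun x => ‖u x‖ ^ 2 with hqdef
  have hqint : Integrable q := by
    have h := hu2.integrable_norm_rpow (by norm_num) (by norm_num)
    have h2 : ((2 : ℝ≥0∞)).toReal = (2 : ℝ) := by norm_num
    refine h.congr (Filter.Eventually.of_forall fun x => ?_)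
    norm_num
    simp [hqdef]
  set Kb : ℝ → ℝ := fun z => Real.sqrt (Real.pi / b) * Real.exp (-(1/(4*b)) * z ^ 2) with hKbdef
  have hKbint : Integrable Kb := (integrable_exp_neg_mul_sq (by positivity)).const_mul _
  have hKb0 : ∀ z, 0 ≤ Kb z := fun z => by positivity
  have hKbflip : ∀ x y : ℝ, Kb (x - y) = Kb (y - x) := by
    intro x y
    simp only [hKbdef]
    rw [show ((x - y:ℝ)) = -(y - x) by ring, neg_sq]
  have hKbtot : (∫ z : ℝ, Kb z) = 2 * Real.pi := by
    simp only [hKbdef]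
    rw [integral_const_mul, integral_gaussian]
    rw [← Real.sqrt_mul (by positivity)]
    rw [show Real.pi / b * (Real.pi / (1/(4*b))) = (2*Real.pi)^2 by field_simp; ring]
    exact Real.sqrt_sq (by positivity)
  -- the triple integrand, with exponentials partially combined
  set E : ℝ × (ℝ × ℝ) → ℂ := fun p =>
    u p.2.1 * (starRingEnd ℂ) (u p.2.2) *
      (Complex.exp (I * ((p.2.2 : ℂ) - (p.2.1 : ℂ)) * (p.1 : ℂ)) *
        Complex.exp (-(b : ℂ) * (p.1 : ℂ) ^ 2)) with hEdef
  have hnorm1 : ∀ x y k : ℝ, ‖Complex.exp (I * ((y : ℂ) - (x : ℂ)) * (k : ℂ))‖ = 1 := by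
    intro x y k
    rw [Complex.norm_exp]
    have : (I * ((y : ℂ) - (x : ℂ)) * (k : ℂ)).re = 0 := by
      simp [Complex.mul_re, Complex.mul_im]
    rw [this, Real.exp_zero]
  have hnorm2 : ∀ k : ℝ, ‖Complex.exp (-(b : ℂ) * (k : ℂ) ^ 2)‖ = Real.exp (-b * k ^ 2) := by
    intro k
    rw [show -(b:ℂ) * (k:ℂ)^2 = ((-b * k^2 : ℝ) : ℂ) by push_cast; ring]
    rw [Complex.norm_exp_ofReal]
  -- integrability of E
  have hEint : Integrable E
      ((volume : Measure ℝ).prod ((volume : Measure ℝ).prod (volume : Measure ℝ))) := by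
    have hmaj : Integrable (fun p : ℝ × (ℝ × ℝ) => Real.exp (-b * p.1 ^ 2) * (‖u p.2.1‖ * ‖u p.2.2‖))
        ((volume : Measure ℝ).prod ((volume : Measure ℝ).prod (volume : Measure ℝ))) :=
      Integrable.mul_prod (integrable_exp_neg_mul_sq hb) (hu1.norm.mul_prod hu1.norm)
    have hu' : AEStronglyMeasurable u (volume : Measure ℝ) := hu1.1
    have hmeas : AEStronglyMeasurable E
        ((volume : Measure ℝ).prod ((volume : Measure ℝ).prod (volume : Measure ℝ))) := by
      refine AEStronglyMeasurable.mul (AEStronglyMeasurable.mul ?_ ?_)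
        (Continuous.aestronglyMeasurable (by fun_prop))
      · exact (hu'.comp_fst (ν := (volume : Measure ℝ))).comp_snd
      · exact ((Complex.continuous_conj.comp_aestronglyMeasurable hu').comp_snd
          (μ := (volume : Measure ℝ))).comp_snd
    refine hmaj.mono' hmeas (Filter.Eventually.of_forall fun p => ?_)
    simp only [hEdef, norm_mul]
    rw [hnorm1, hnorm2, RCLike.norm_conj]
    have h1 := Real.exp_pos (-b * p.1 ^ 2)
    nlinarith [norm_nonneg (u p.2.1), norm_nonneg (u p.2.2),
      mul_nonneg (norm_nonneg (u p.2.1)) (norm_nonneg (u p.2.2))]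
  -- identification of the k-slices
  have hexp : ∀ k x y : ℝ,
      Complex.exp (-(b:ℂ) * (k:ℂ) ^ 2) *
        ((u x * Complex.exp (-(I * (k:ℂ) * (x:ℂ)))) *
          (starRingEnd ℂ) (u y * Complex.exp (-(I * (k:ℂ) * (y:ℂ)))))
      = E (k, (x, y)) := by
    intro k x y
    have h1 : (starRingEnd ℂ) (u y * Complex.exp (-(I * (k:ℂ) * (y:ℂ))))
        = (starRingEnd ℂ) (u y) * Complex.exp (I * (k:ℂ) * (y:ℂ)) := by
      rw [map_mul, ← Complex.exp_conj]
      congr 1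
      simp
    rw [h1]
    show _ = u x * (starRingEnd ℂ) (u y) *
      (Complex.exp (I * ((y:ℂ) - (x:ℂ)) * (k:ℂ)) * Complex.exp (-(b:ℂ) * (k:ℂ) ^ 2))
    rw [show I * ((y:ℂ) - (x:ℂ)) * (k:ℂ) = I * (k:ℂ) * (y:ℂ) + -(I * (k:ℂ) * (x:ℂ)) by ring,
      Complex.exp_add]
    ring
  have hJ1 : ∀ k : ℝ, Complex.exp (-(b:ℂ) * (k:ℂ) ^ 2) * (Sft u k * (starRingEnd ℂ) (Sft u k))
      = ∫ p : ℝ × ℝ, E (k, p) ∂((volume : Measure ℝ).prod (volume : Measure ℝ)) := by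
    intro k
    have hconj : (starRingEnd ℂ) (Sft u k)
        = ∫ y : ℝ, (starRingEnd ℂ) (u y * Complex.exp (-(I * (k:ℂ) * (y:ℂ)))) := by
      rw [Sft, ← integral_conj]
    rw [hconj, Sft, ← integral_prod_mul, ← integral_const_mul]
    exact integral_congr_ae (Filter.Eventually.of_forall fun p => hexp k p.1 p.2)
  -- Fubini swap
  have hswap : (∫ k : ℝ, Complex.exp (-(b:ℂ) * (k:ℂ) ^ 2) * (Sft u k * (starRingEnd ℂ) (Sft u k)))
      = ∫ p : ℝ × ℝ, (∫ k : ℝ, E (k, p)) ∂((volume : Measure ℝ).prod (volume : Measure ℝ)) := by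
    rw [show (fun k : ℝ => Complex.exp (-(b:ℂ) * (k:ℂ) ^ 2) * (Sft u k * (starRingEnd ℂ) (Sft u k)))
        = fun k : ℝ => ∫ p : ℝ × ℝ, E (k, p) ∂((volume : Measure ℝ).prod (volume : Measure ℝ))
      from funext hJ1]
    exact MeasureTheory.integral_integral_swap hEint
  -- evaluation of the inner Gaussian integral
  have hinner : ∀ p : ℝ × ℝ,
      (∫ k : ℝ, E (k, p)) = u p.1 * (starRingEnd ℂ) (u p.2) * ((Kb (p.2 - p.1) : ℝ) : ℂ) := by
    intro p
    have heq : (fun k : ℝ => E (k, p))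
        = fun k : ℝ => u p.1 * (starRingEnd ℂ) (u p.2) *
            (Complex.exp (I * ((p.2 : ℂ) - (p.1 : ℂ)) * (k : ℂ)) *
              Complex.exp (-(b:ℂ) * (k:ℂ) ^ 2)) := rfl
    rw [heq, integral_const_mul]
    congr 1
    have hgauss := fourierIntegral_gaussian (b := (b : ℂ)) (by simpa using hb) ((p.2 : ℂ) - (p.1 : ℂ))
    rw [hgauss]
    have hA : ((Real.sqrt (Real.pi / b) : ℝ) : ℂ) = ((Real.pi : ℂ) / (b : ℂ)) ^ (1/2 : ℂ) := by
      rw [Real.sqrt_eq_rpow, Complex.ofReal_cpow (by positivity)]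
      push_cast
      norm_num
    have hB : ((Real.exp (-(1/(4*b)) * (p.2 - p.1) ^ 2) : ℝ) : ℂ)
        = Complex.exp (-((p.2:ℂ) - (p.1:ℂ)) ^ 2 / (4 * (b:ℂ))) := by
      rw [Complex.ofReal_exp]
      congr 1
      have hb' : (b : ℂ) ≠ 0 := Complex.ofReal_ne_zero.2 hb.ne'
      push_cast
      field_simp
      all_goals ring
    simp only [hKbdef]
    rw [Complex.ofReal_mul, hA, hB]
  -- realness
  have hreal : (∫ k : ℝ, Real.exp (-b * k ^ 2) * ‖Sft u k‖ ^ 2)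
      = (∫ k : ℝ, Complex.exp (-(b:ℂ) * (k:ℂ) ^ 2) * (Sft u k * (starRingEnd ℂ) (Sft u k))).re := by
    have hpt : ∀ k : ℝ, Complex.exp (-(b:ℂ) * (k:ℂ) ^ 2) * (Sft u k * (starRingEnd ℂ) (Sft u k))
        = ((Real.exp (-b * k ^ 2) * ‖Sft u k‖ ^ 2 : ℝ) : ℂ) := by
      intro k
      rw [Complex.mul_conj, Complex.normSq_eq_norm_sq]
      rw [show -(b:ℂ) * (k:ℂ)^2 = ((-b * k^2 : ℝ) : ℂ) by push_cast; ring, ← Complex.ofReal_exp]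
      push_cast
      ring
    rw [show (fun k : ℝ => Complex.exp (-(b:ℂ) * (k:ℂ) ^ 2) * (Sft u k * (starRingEnd ℂ) (Sft u k)))
        = fun k : ℝ => ((Real.exp (-b * k ^ 2) * ‖Sft u k‖ ^ 2 : ℝ) : ℂ) from funext hpt]
    rw [show (∫ k : ℝ, ((Real.exp (-b * k ^ 2) * ‖Sft u k‖ ^ 2 : ℝ) : ℂ))
        = ((∫ k : ℝ, Real.exp (-b * k ^ 2) * ‖Sft u k‖ ^ 2 : ℝ) : ℂ) from integral_ofReal,
      Complex.ofReal_re]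
  -- integrability of the two majorant pieces
  have hconv : Integrable (fun p : ℝ × ℝ => q p.2 * Kb (p.1 - p.2))
      ((volume : Measure ℝ).prod (volume : Measure ℝ)) := by
    have := MeasureTheory.Integrable.convolution_integrand (ContinuousLinearMap.mul ℝ ℝ) hqint hKbint
    exact this
  have hc1 : Integrable (fun p : ℝ × ℝ => q p.1 * Kb (p.2 - p.1))
      ((volume : Measure ℝ).prod (volume : Measure ℝ)) := by
    have h := hconv.swap
    exact h.congr (Filter.Eventually.of_forall fun p => rfl)
  have hc2 : Integrable (fun p : ℝ × ℝ => q p.2 * Kb (p.2 - p.1))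
      ((volume : Measure ℝ).prod (volume : Measure ℝ)) := by
    refine hconv.congr (Filter.Eventually.of_forall fun p => ?_)
    show q p.2 * Kb (p.1 - p.2) = q p.2 * Kb (p.2 - p.1)
    rw [hKbflip]
  -- the main estimate
  have hmain : (∫ k : ℝ, Real.exp (-b * k ^ 2) * ‖Sft u k‖ ^ 2)
      ≤ ∫ p : ℝ × ℝ, ((1/2 : ℝ) * (q p.1 * Kb (p.2 - p.1)) + (1/2 : ℝ) * (q p.2 * Kb (p.2 - p.1)))
          ∂((volume : Measure ℝ).prod (volume : Measure ℝ)) := by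
    rw [hreal]
    refine le_trans (Complex.re_le_norm _) ?_
    rw [hswap]
    refine le_trans (norm_integral_le_integral_norm _) ?_
    refine integral_mono_of_nonneg (Filter.Eventually.of_forall fun p => norm_nonneg _)
      ((hc1.const_mul _).add (hc2.const_mul _)) (Filter.Eventually.of_forall fun p => ?_)
    show ‖∫ k : ℝ, E (k, p)‖
      ≤ (1/2 : ℝ) * (q p.1 * Kb (p.2 - p.1)) + (1/2 : ℝ) * (q p.2 * Kb (p.2 - p.1))
    rw [hinner p]
    rw [norm_mul, norm_mul, RCLike.norm_conj, Complex.norm_real, Real.norm_eq_abs,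
      _root_.abs_of_nonneg (hKb0 _)]
    have hq1 : q p.1 = ‖u p.1‖ ^ 2 := rfl
    have hq2 : q p.2 = ‖u p.2‖ ^ 2 := rfl
    rw [hq1, hq2]
    nlinarith [mul_nonneg (hKb0 (p.2 - p.1)) (sq_nonneg (‖u p.1‖ - ‖u p.2‖))]
  refine hmain.trans ?_
  -- evaluate the majorant integral
  have hT1 : (∫ p : ℝ × ℝ, q p.1 * Kb (p.2 - p.1)
      ∂((volume : Measure ℝ).prod (volume : Measure ℝ))) = (∫ x : ℝ, q x) * (2 * Real.pi) := by
    rw [MeasureTheory.integral_prod _ hc1]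
    have : ∀ x : ℝ, (∫ y : ℝ, q x * Kb (y - x)) = q x * (2 * Real.pi) := by
      intro x
      rw [integral_const_mul, integral_sub_right_eq_self Kb x, hKbtot]
    simp_rw [this]
    rw [integral_mul_const]
  have hT2 : (∫ p : ℝ × ℝ, q p.2 * Kb (p.2 - p.1)
      ∂((volume : Measure ℝ).prod (volume : Measure ℝ))) = (∫ x : ℝ, q x) * (2 * Real.pi) := by
    rw [MeasureTheory.integral_prod _ hc2]
    rw [MeasureTheory.integral_integral_swap (by exact hc2)]
    have hinner2 : ∀ y : ℝ, (∫ x : ℝ, q y * Kb (y - x)) = q y * (2 * Real.pi) := by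
      intro y
      rw [integral_const_mul, integral_sub_left_eq_self Kb volume y, hKbtot]
    simp_rw [hinner2]
    rw [integral_mul_const]
  rw [integral_add (hc1.const_mul _) (hc2.const_mul _), integral_const_mul, integral_const_mul,
    hT1, hT2]
  have hfin : (1/2:ℝ) * ((∫ x : ℝ, q x) * (2 * Real.pi)) + (1/2:ℝ) * ((∫ x : ℝ, q x) * (2 * Real.pi))
      = 2 * Real.pi * ∫ x : ℝ, q x := by ring
  rw [hfin]

lemma Sft_sq_integrable (u : ℝ → ℂ) (hu1 : Integrable u)
    (hu2 : MemLp u 2 (volume : Measure ℝ)) :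
    Integrable (fun k : ℝ => ‖Sft u k‖ ^ 2) := by
  have hScont : Continuous (Sft u) := Sft_continuous u hu1
  have hmeas : Continuous fun k : ℝ => ‖Sft u k‖ ^ 2 := (hScont.norm.pow 2)
  set Cu : ℝ := ∫ x : ℝ, ‖u x‖ with hCu
  have hCu0 : 0 ≤ Cu := integral_nonneg fun x => norm_nonneg _
  have hbig : ∀ n : ℕ, Integrable (fun k : ℝ => Real.exp (-((n:ℝ)+1)⁻¹ * k ^ 2) * ‖Sft u k‖ ^ 2) := by
    intro n
    have hpos : (0:ℝ) < ((n:ℝ)+1)⁻¹ := by positivity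
    refine Integrable.mono' ((integrable_exp_neg_mul_sq hpos).const_mul (Cu ^ 2))
      ((Real.continuous_exp.comp (by fun_prop)).mul (hmeas) |>.aestronglyMeasurable)
      (Filter.Eventually.of_forall fun k => ?_)
    rw [Real.norm_eq_abs, abs_of_nonneg (by positivity)]
    rw [mul_comm (Cu ^ 2)]
    refine mul_le_mul_of_nonneg_left ?_ (Real.exp_pos _).le
    exact pow_le_pow_left₀ (norm_nonneg _) (norm_Sft_le u k) 2
  set φ : ℕ → ℝ → ℝ≥0∞ := fun n k =>
    ENNReal.ofReal (Real.exp (-((n:ℝ)+1)⁻¹ * k ^ 2) * ‖Sft u k‖ ^ 2) with hφ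
  have hmono : ∀ k : ℝ, Monotone fun n : ℕ => φ n k := by
    intro k n m hnm
    refine ENNReal.ofReal_le_ofReal ?_
    refine mul_le_mul_of_nonneg_right (Real.exp_le_exp.2 ?_) (sq_nonneg _)
    have h1 : ((m:ℝ)+1)⁻¹ ≤ ((n:ℝ)+1)⁻¹ := by
      refine inv_anti₀ (by positivity) (by exact_mod_cast by linarith [hnm])
    nlinarith [sq_nonneg k]
  have htendsto : ∀ k : ℝ, Tendsto (fun n : ℕ => φ n k) atTop
      (𝓝 (ENNReal.ofReal (‖Sft u k‖ ^ 2))) := by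
    intro k
    refine (ENNReal.continuous_ofReal.continuousAt.tendsto.comp ?_)
    have h1 : Tendsto (fun n : ℕ => ((n:ℝ)+1)⁻¹) atTop (𝓝 0) := by
      have := tendsto_one_div_add_atTop_nhds_zero_nat (𝕜 := ℝ)
      simpa [one_div] using this
    have h2 : Tendsto (fun n : ℕ => Real.exp (-((n:ℝ)+1)⁻¹ * k ^ 2)) atTop (𝓝 1) := by
      have h3 : Tendsto (fun n : ℕ => -((n:ℝ)+1)⁻¹ * k ^ 2) atTop (𝓝 0) := by
        have := (h1.neg).mul_const (k ^ 2)
        simpa using this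
      have := (Real.continuous_exp.continuousAt (x := 0)).tendsto.comp h3
      simpa [Function.comp_def] using this
    have := h2.mul_const (‖Sft u k‖ ^ 2)
    simpa using this
  have hlim := lintegral_tendsto_of_tendsto_of_monotone
    (f := φ) (F := fun k => ENNReal.ofReal (‖Sft u k‖ ^ 2))
    (fun n => ((hbig n).aestronglyMeasurable.aemeasurable.ennreal_ofReal))
    (Filter.Eventually.of_forall hmono) (Filter.Eventually.of_forall htendsto)
  have hbd : ∀ n : ℕ, (∫⁻ k : ℝ, φ n k) ≤ ENNReal.ofReal (2 * Real.pi * ∫ x : ℝ, ‖u x‖ ^ 2) := by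
    intro n
    have hpos : (0:ℝ) < ((n:ℝ)+1)⁻¹ := by positivity
    rw [hφ]
    rw [← MeasureTheory.ofReal_integral_eq_lintegral_ofReal (hbig n)
      (Filter.Eventually.of_forall fun k => by positivity)]
    exact ENNReal.ofReal_le_ofReal (gaussian_smoothed_bound u hu1 hu2 hpos)
  have hfin : (∫⁻ k : ℝ, ENNReal.ofReal (‖Sft u k‖ ^ 2))
      ≤ ENNReal.ofReal (2 * Real.pi * ∫ x : ℝ, ‖u x‖ ^ 2) :=
    le_of_tendsto' hlim hbd
  refine ⟨hmeas.aestronglyMeasurable, ?_⟩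
  rw [hasFiniteIntegral_iff_ofReal (Filter.Eventually.of_forall fun k => sq_nonneg _)]
  exact lt_of_le_of_lt hfin ENNReal.ofReal_lt_top

/-- Core limit lemma. -/
lemma core_limit {F G : ℝ → ℝ} (hFc : Continuous F) (hGc : Continuous G)
    (hF0 : ∀ x, 0 ≤ F x) (hG0 : ∀ x, 0 ≤ G x)
    (hF2 : Integrable (fun t => F t ^ 2)) (hG2 : Integrable (fun t => G t ^ 2))
    (hGtop : Tendsto G (cocompact ℝ) (𝓝 0))
    {c : ℝ} (hc : c ≠ 0) {a : ℝ → ℝ}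
    (ha : Tendsto (fun η => |a η|) (𝓝[>] (0:ℝ)) atTop) :
    Tendsto (fun η : ℝ => ∫ t : ℝ, F t * G (a η + c * t)) (𝓝[>] (0:ℝ)) (𝓝 0) := by
  -- G is bounded
  obtain ⟨M, hM0, hM⟩ : ∃ M, 0 ≤ M ∧ ∀ x, G x ≤ M := by
    have h1 : ∀ᶠ x in cocompact ℝ, G x < 1 := by
      have := hGtop.eventually (eventually_lt_nhds (by norm_num : (0:ℝ) < 1))
      exact this
    obtain ⟨K, hK, hK1⟩ := (hasBasis_cocompact.eventually_iff).mp h1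
    rcases K.eq_empty_or_nonempty with h | hne
    · exact ⟨1, zero_le_one, fun x => (hK1 (by simp [h])).le⟩
    obtain ⟨C, hC⟩ := hK.exists_bound_of_continuousOn hGc.continuousOn
    refine ⟨max C 1, le_trans ?_ (le_max_left _ _), fun x => ?_⟩
    · obtain ⟨x0, hx0⟩ := hne
      exact (hG0 x0).trans ((le_abs_self _).trans (by simpa using hC x0 hx0))
    by_cases hx : x ∈ K
    · exact le_trans ((le_abs_self _).trans (by simpa using hC x hx)) (le_max_left _ _)
    · exact le_trans (hK1 hx).le (le_max_right _ _)
  -- integrability of squares of shifted G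
  have hGa2 : ∀ a' : ℝ, Integrable (fun t => G (a' + c * t) ^ 2) := by
    intro a'
    have h1 : Integrable (fun y : ℝ => G (a' + y) ^ 2) := by
      have := hG2.comp_add_left a'  -- maybe name wrong
      exact this
    have h2 := h1.comp_mul_left' hc
    exact h2
  -- integrability of the product
  have hint : ∀ a' : ℝ, Integrable (fun t => F t * G (a' + c * t)) := by
    intro a'
    have hgint : Integrable (fun t => (1/2 : ℝ) * (F t ^ 2 + G (a' + c * t) ^ 2)) := by
      have := (hF2.add (hGa2 a')).const_mul (1/2 : ℝ)
      simpa [Pi.add_apply] using this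
    refine Integrable.mono' hgint
      ((hFc.mul (hGc.comp (continuous_const.add (continuous_const.mul continuous_id)))).aestronglyMeasurable) ?_
    refine Filter.Eventually.of_forall fun t => ?_
    have h1 : 0 ≤ F t := hF0 t
    have h2 : 0 ≤ G (a' + c * t) := hG0 _
    rw [Real.norm_eq_abs, abs_of_nonneg (mul_nonneg h1 h2)]
    nlinarith [sq_nonneg (F t - G (a' + c * t))]
  -- change of variables for the square-norm of shifted G
  have hGa2int : ∀ a' : ℝ, (∫ t, G (a' + c * t) ^ 2) ≤ (∫ t, G t ^ 2) / |c| := by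
    intro a'
    have h1 : (∫ t, G (a' + c * t) ^ 2) = |c⁻¹| • ∫ y, G (a' + y) ^ 2 :=
      MeasureTheory.Measure.integral_comp_mul_left (fun y => G (a' + y) ^ 2) c
    have h2 : (∫ y : ℝ, G (a' + y) ^ 2) = ∫ y, G y ^ 2 :=
      integral_add_left_eq_self (fun y => G y ^ 2) a'
    rw [h1, h2, smul_eq_mul, abs_inv]
    rw [inv_mul_eq_div]
  have hK2 : (0:ℝ) ≤ (∫ t, G t ^ 2) / |c| :=
    div_nonneg (integral_nonneg fun t => sq_nonneg _) (abs_nonneg c)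
  rw [NormedAddCommGroup.tendsto_nhds_zero]
  intro ε hε
  -- choose lambda
  set K2 : ℝ := (∫ t, G t ^ 2) / |c| with hK2def
  set lam : ℝ := (K2 + 1) / (ε / 4) with hlam
  have hlam0 : 0 < lam := by positivity
  have hlamK2 : 1 / (2 * lam) * K2 ≤ ε / 4 := by
    rw [hlam]
    rw [div_mul_eq_mul_div, mul_comm]
    rw [div_le_iff₀ (by positivity)]
    have : K2 ≤ K2 + 1 := by linarith
    calc K2 * 1 ≤ (K2 + 1) * 1 := by linarith
    _ ≤ (K2+1) * 2 := by nlinarith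
    _ = ε / 4 * (2 * ((K2 + 1) / (ε / 4))) := by field_simp
  -- choose R with small tail
  obtain ⟨R, hR⟩ : ∃ R : ℕ, (∫ t in (Metric.closedBall (0:ℝ) R)ᶜ, F t ^ 2) < ε / (4 * lam) := by
    have htail : Tendsto (fun n : ℕ => ∫ t in (Metric.closedBall (0:ℝ) n)ᶜ, F t ^ 2)
        atTop (𝓝 0) := by
      have key : Tendsto (fun n : ℕ =>
          ∫ t, Set.indicator (Metric.closedBall (0:ℝ) n)ᶜ (fun t => F t ^ 2) t)
          atTop (𝓝 (∫ t : ℝ, (0:ℝ))) := by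
        refine tendsto_integral_filter_of_dominated_convergence (fun t => F t ^ 2) ?_ ?_ hF2 ?_
        · exact Filter.Eventually.of_forall fun n =>
            (hF2.aestronglyMeasurable.indicator measurableSet_closedBall.compl)
        · refine Filter.Eventually.of_forall fun n => Filter.Eventually.of_forall fun t => ?_
          rw [Real.norm_eq_abs]
          by_cases ht : t ∈ (Metric.closedBall (0:ℝ) n)ᶜ
          · rw [Set.indicator_of_mem ht, abs_of_nonneg (sq_nonneg _)]
          · rw [Set.indicator_of_notMem ht, abs_zero]; exact sq_nonneg _
        · refine Filter.Eventually.of_forall fun t => ?_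
          refine Tendsto.congr' ?_ (tendsto_const_nhds (x := (0:ℝ)))
          filter_upwards [eventually_ge_atTop ⌈|t|⌉₊] with n hn
          have ht : t ∈ Metric.closedBall (0:ℝ) n := by
            rw [Metric.mem_closedBall, Real.dist_eq, sub_zero]
            exact le_trans (Nat.le_ceil _) (by exact_mod_cast hn)
          rw [Set.indicator_of_notMem (by simpa using ht)]
      simp only [integral_zero] at key
      refine key.congr fun n => ?_
      rw [MeasureTheory.integral_indicator measurableSet_closedBall.compl]
    exact ((htail.eventually (eventually_lt_nhds (by positivity : (0:ℝ) < ε / (4 * lam)))).exists)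
  set s : Set ℝ := Metric.closedBall (0:ℝ) R
  have hs : MeasurableSet s := measurableSet_closedBall
  -- term 2 bound, for every η
  have hterm2 : ∀ a' : ℝ, (∫ t in sᶜ, F t * G (a' + c * t)) ≤ ε / 2 := by
    intro a'
    have hle : ∀ t : ℝ, F t * G (a' + c * t)
        ≤ lam / 2 * F t ^ 2 + 1 / (2 * lam) * G (a' + c * t) ^ 2 := by
      intro t
      have h2 : 0 ≤ G (a' + c * t) := hG0 _
      have hsq := sq_nonneg (lam * F t - G (a' + c * t))
      have h3 : 0 < 2 * lam := by positivity
      rw [← sub_nonneg]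
      have key : lam / 2 * F t ^ 2 + 1 / (2 * lam) * G (a' + c * t) ^ 2 - F t * G (a' + c * t)
          = (lam * F t - G (a' + c * t)) ^ 2 / (2 * lam) := by
        field_simp
        ring
      rw [key]
      positivity
    have hi1 : IntegrableOn (fun t => F t * G (a' + c * t)) sᶜ := (hint a').integrableOn
    have hi2 : IntegrableOn (fun t => lam / 2 * F t ^ 2 + 1 / (2 * lam) * G (a' + c * t) ^ 2) sᶜ :=
      ((hF2.const_mul _).add ((hGa2 a').const_mul _)).integrableOn
    calc (∫ t in sᶜ, F t * G (a' + c * t))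
        ≤ ∫ t in sᶜ, (lam / 2 * F t ^ 2 + 1 / (2 * lam) * G (a' + c * t) ^ 2) :=
          setIntegral_mono_on hi1 hi2 hs.compl (fun t _ => hle t)
      _ = lam / 2 * (∫ t in sᶜ, F t ^ 2) + 1 / (2 * lam) * (∫ t in sᶜ, G (a' + c * t) ^ 2) := by
          rw [integral_add (hF2.const_mul _).integrableOn ((hGa2 a').const_mul _).integrableOn,
            integral_const_mul, integral_const_mul]
      _ ≤ lam / 2 * (ε / (4 * lam)) + 1 / (2 * lam) * K2 := by
          refine add_le_add (mul_le_mul_of_nonneg_left hR.le (by positivity))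
            (mul_le_mul_of_nonneg_left ?_ (by positivity))
          exact le_trans (setIntegral_le_integral (hGa2 a')
            (Filter.Eventually.of_forall fun t => sq_nonneg _)) (hGa2int a')
      _ ≤ ε / 4 + ε / 4 := by
          refine add_le_add ?_ hlamK2
          have heq : lam / 2 * (ε / (4 * lam)) = ε / 8 := by field_simp; ring
          rw [heq]; linarith
      _ = ε / 2 := by ring
  -- term 1 tends to zero
  have hterm1 : Tendsto (fun η => ∫ t in s, F t * G (a η + c * t)) (𝓝[>] (0:ℝ)) (𝓝 0) := by
    have hFM : IntegrableOn (fun t => F t * M) s :=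
      ((hFc.continuousOn.integrableOn_compact (isCompact_closedBall (0:ℝ) R)).mul_const M)
    have h0 : (0:ℝ) = ∫ t in s, (0:ℝ) := by simp
    rw [show (𝓝 (0:ℝ)) = 𝓝 (∫ t in s, (0:ℝ)) by simp]
    refine tendsto_integral_filter_of_dominated_convergence (fun t => F t * M) ?_ ?_ hFM ?_
    · exact Filter.Eventually.of_forall fun η =>
        ((hFc.mul (hGc.comp (continuous_const.add (continuous_const.mul continuous_id))))
          |>.aestronglyMeasurable).restrict
    · refine Filter.Eventually.of_forall fun η => ?_
      refine Filter.Eventually.of_forall fun t => ?_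
      rw [Real.norm_eq_abs, abs_of_nonneg (mul_nonneg (hF0 t) (hG0 _))]
      exact mul_le_mul_of_nonneg_left (hM _) (hF0 t)
    · refine Filter.Eventually.of_forall fun t => ?_
      have harg : Tendsto (fun η => a η + c * t) (𝓝[>] (0:ℝ)) (cocompact ℝ) := by
        rw [← Metric.cobounded_eq_cocompact]
        rw [← tendsto_norm_atTop_iff_cobounded]
        refine tendsto_atTop_mono (fun η => ?_) (tendsto_atTop_add_const_right _ (-|c * t|) ha)
        have : |a η| ≤ |a η + c * t| + |c * t| := by
          calc |a η| = |(a η + c * t) + (-(c * t))| := by ring_nf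
          _ ≤ |a η + c * t| + |(-(c * t))| := abs_add_le _ _
          _ = |a η + c * t| + |c * t| := by rw [abs_neg]
        rw [Real.norm_eq_abs]
        linarith
      have := hGtop.comp harg
      have h2 : Tendsto (fun η => F t * G (a η + c * t)) (𝓝[>] (0:ℝ)) (𝓝 (F t * 0)) :=
        Tendsto.const_mul (F t) this
      simpa using h2
  -- combine
  have h1 := (Metric.tendsto_nhds.mp hterm1) (ε/2) (by positivity)
  filter_upwards [h1] with η hη
  rw [Real.dist_eq, sub_zero] at hη
  have hsplit : (∫ t, F t * G (a η + c * t))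
      = (∫ t in s, F t * G (a η + c * t)) + (∫ t in sᶜ, F t * G (a η + c * t)) :=
    (integral_add_compl hs (hint (a η))).symm
  rw [Real.norm_eq_abs, abs_of_nonneg (integral_nonneg fun t => mul_nonneg (hF0 t) (hG0 _))]
  rw [hsplit]
  have h2 := hterm2 (a η)
  have h3 : (∫ t in s, F t * G (a η + c * t)) < ε / 2 := (le_abs_self _).trans_lt hη

  linarith

lemma cov (φ : ℝ → ℝ) (ω s : ℝ) : (∫ k : ℝ, φ ((k - ω) / s)) = |s| * ∫ t : ℝ, φ t := by
  have h1 : (∫ k : ℝ, φ ((k - ω) / s)) = ∫ k : ℝ, φ (k / s) :=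
    integral_sub_right_eq_self (fun j => φ (j / s)) ω
  rw [h1, MeasureTheory.Measure.integral_comp_div φ s, smul_eq_mul]

theorem stmt5 (um un : ℝ → ℂ)
    (hum1 : Integrable um) (hun1 : Integrable un)
    (hum2 : MemLp um 2 (volume : Measure ℝ)) (hun2 : MemLp un 2 (volume : Measure ℝ))
    (hum0 : ¬ um =ᵐ[(volume : Measure ℝ)] 0)
    (wm wn ωm ωn : ℝ) (hwm : wm ≠ 0) (hwn : wn ≠ 0) (hω : ωm ≠ ωn) :
    Tendsto (fun η : ℝ =>
        (∫ k : ℝ, ((1 / (η * |wm|)) * ‖ft um ((k - ωm) / (η * wm))‖) *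
            ((1 / (η * |wn|)) * ‖ft un ((k - ωn) / (η * wn))‖)) /
          (∫ k : ℝ, ((1 / (η * |wm|)) * ‖ft um ((k - ωm) / (η * wm))‖) ^ 2))
      (nhdsWithin 0 (Set.Ioi 0)) (nhds 0) := by
  have hc₀0 : (0:ℝ) < 1 / Real.sqrt (2 * Real.pi) := by
    have := Real.sqrt_pos.2 (by positivity : (0:ℝ) < 2 * Real.pi)
    positivity
  have hfteq : ∀ (u : ℝ → ℂ) (k : ℝ), ‖ft u k‖ = (1 / Real.sqrt (2 * Real.pi)) * ‖Sft u k‖ := by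
    intro u k
    rw [ft_eq_Sft, norm_mul, Complex.norm_real, Real.norm_eq_abs, abs_of_pos hc₀0]
  -- continuity and decay facts
  have hFc : Continuous (fun k : ℝ => ‖ft um k‖) := by
    have : Continuous (ft um) := continuous_const.mul (Sft_continuous um hum1)
    exact this.norm
  have hGc : Continuous (fun k : ℝ => ‖ft un k‖) := by
    have : Continuous (ft un) := continuous_const.mul (Sft_continuous un hun1)
    exact this.norm
  have hF0 : ∀ k : ℝ, 0 ≤ ‖ft um k‖ := fun k => norm_nonneg _
  have hG0 : ∀ k : ℝ, 0 ≤ ‖ft un k‖ := fun k => norm_nonneg _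
  have hF2 : Integrable (fun k : ℝ => ‖ft um k‖ ^ 2) := by
    refine ((Sft_sq_integrable um hum1 hum2).const_mul ((1 / Real.sqrt (2 * Real.pi)) ^ 2)).congr
      (Filter.Eventually.of_forall fun k => ?_)
    show (1 / Real.sqrt (2 * Real.pi)) ^ 2 * ‖Sft um k‖ ^ 2 = ‖ft um k‖ ^ 2
    rw [hfteq, mul_pow]
  have hG2 : Integrable (fun k : ℝ => ‖ft un k‖ ^ 2) := by
    refine ((Sft_sq_integrable un hun1 hun2).const_mul ((1 / Real.sqrt (2 * Real.pi)) ^ 2)).congr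
      (Filter.Eventually.of_forall fun k => ?_)
    show (1 / Real.sqrt (2 * Real.pi)) ^ 2 * ‖Sft un k‖ ^ 2 = ‖ft un k‖ ^ 2
    rw [hfteq, mul_pow]
  have hGtop : Tendsto (fun k : ℝ => ‖ft un k‖) (cocompact ℝ) (𝓝 0) := by
    have h1 := (Sft_tendsto_cocompact un).norm
    have h2 := h1.const_mul (1 / Real.sqrt (2 * Real.pi))
    simp only [norm_zero, mul_zero] at h2
    refine h2.congr fun k => ?_
    rw [← hfteq]
  set A : ℝ := ∫ t : ℝ, ‖ft um t‖ ^ 2 with hA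
  -- change of variables for the denominator
  have hD : ∀ η : ℝ, (∫ k : ℝ, ((1 / (η * |wm|)) * ‖ft um ((k - ωm) / (η * wm))‖) ^ 2)
      = (1 / (η * |wm|)) ^ 2 * (|η * wm| * A) := by
    intro η
    have h1 : (fun k : ℝ => ((1 / (η * |wm|)) * ‖ft um ((k - ωm) / (η * wm))‖) ^ 2)
        = fun k : ℝ => (1 / (η * |wm|)) ^ 2 *
            ((fun t : ℝ => ‖ft um t‖ ^ 2) ((k - ωm) / (η * wm))) := by
      funext k
      simp [mul_pow]
    rw [h1, integral_const_mul, cov (fun t : ℝ => ‖ft um t‖ ^ 2) ωm (η * wm)]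
  -- change of variables for the numerator
  have hN : ∀ η : ℝ, η ≠ 0 →
      (∫ k : ℝ, ((1 / (η * |wm|)) * ‖ft um ((k - ωm) / (η * wm))‖) *
          ((1 / (η * |wn|)) * ‖ft un ((k - ωn) / (η * wn))‖))
      = (1 / (η * |wm|)) * (1 / (η * |wn|)) *
          (|η * wm| * ∫ t : ℝ, ‖ft um t‖ * ‖ft un ((ωm - ωn) / (η * wn) + (wm / wn) * t)‖) := by
    intro η hη
    have hs : (η * wm) ≠ 0 := mul_ne_zero hη hwm
    have hr : (η * wn) ≠ 0 := mul_ne_zero hη hwn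
    have h1 : (fun k : ℝ => ((1 / (η * |wm|)) * ‖ft um ((k - ωm) / (η * wm))‖) *
          ((1 / (η * |wn|)) * ‖ft un ((k - ωn) / (η * wn))‖))
        = fun k : ℝ => ((1 / (η * |wm|)) * (1 / (η * |wn|))) *
            ((fun t : ℝ => ‖ft um t‖ * ‖ft un ((ωm - ωn) / (η * wn) + (wm / wn) * t)‖)
              ((k - ωm) / (η * wm))) := by
      funext k
      have harg : (ωm - ωn) / (η * wn) + (wm / wn) * ((k - ωm) / (η * wm)) = (k - ωn) / (η * wn) := by
        field_simp
        ring
      simp only [harg]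
      ring
    rw [h1, integral_const_mul,
      cov (fun t : ℝ => ‖ft um t‖ * ‖ft un ((ωm - ωn) / (η * wn) + (wm / wn) * t)‖) ωm (η * wm)]
  by_cases hA0 : A = 0
  · refine Tendsto.congr' ?_ (tendsto_const_nhds (x := (0:ℝ)))
    filter_upwards [self_mem_nhdsWithin] with η hη
    rw [hD η, hA0]
    simp
  · have hδ : ωm - ωn ≠ 0 := sub_ne_zero.2 hω
    have ha : Tendsto (fun η : ℝ => |(ωm - ωn) / (η * wn)|) (𝓝[>] (0:ℝ)) atTop := by
      have h1 : Tendsto (fun η : ℝ => (|ωm - ωn| / |wn|) * η⁻¹) (𝓝[>] (0:ℝ)) atTop :=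
        tendsto_inv_nhdsGT_zero.const_mul_atTop (div_pos (abs_pos.2 hδ) (abs_pos.2 hwn))
      refine h1.congr' ?_
      filter_upwards [self_mem_nhdsWithin] with η hη
      have hη0 : (0:ℝ) < η := hη
      rw [abs_div, abs_mul, abs_of_pos hη0]
      rw [← div_eq_mul_inv, div_div, mul_comm |wn| η]
    have hcore := core_limit (F := fun k : ℝ => ‖ft um k‖) (G := fun k : ℝ => ‖ft un k‖)
      hFc hGc hF0 hG0 hF2 hG2 hGtop (c := wm / wn) (div_ne_zero hwm hwn)
      (a := fun η : ℝ => (ωm - ωn) / (η * wn)) ha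
    have hmul := hcore.const_mul (|wm| / (|wn| * A))
    rw [mul_zero] at hmul
    refine Tendsto.congr' ?_ hmul
    filter_upwards [self_mem_nhdsWithin] with η hη
    have hη0 : (0:ℝ) < η := hη
    rw [hN η hη0.ne', hD η]
    have h1 : |η * wm| = η * |wm| := by rw [abs_mul, abs_of_pos hη0]
    rw [h1]
    have hwm' : |wm| ≠ 0 := abs_ne_zero.2 hwm
    have hwn' : |wn| ≠ 0 := abs_ne_zero.2 hwn
    field_simp
end

section
/- Let g : ℝ → ℂ be integrable, let h : ℝ → ℂ be essentially bounded, let ω ∈ ℝ, w ≠ 0 and δ > 0, and assume h(k) = 0 for almost every k with |k − ω| < δ. Then (1/(η|w|)) ∫_ℝ |g((k − ω)/(η w))| · |h(k)| dk = ∫_ℝ |g(t)| · |h(ω + η w t)| dt, and this quantity tends to 0 as η → 0⁺. -/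
open MeasureTheory Filter

private lemma key_change (g H : ℝ → ℂ) (ω w η : ℝ) (hw : w ≠ 0) (hη : 0 < η) :
    (1 / (η * |w|)) * ∫ k : ℝ, ‖g ((k - ω) / (η * w))‖ * ‖H k‖ =
      ∫ t : ℝ, ‖g t‖ * ‖H (ω + η * w * t)‖ := by
  have ha : η * w ≠ 0 := mul_ne_zero hη.ne' hw
  set F : ℝ → ℝ := fun k => ‖g ((k - ω) / (η * w))‖ * ‖H k‖ with hF
  have h1 : ∀ t : ℝ, ‖g t‖ * ‖H (ω + η * w * t)‖ = F (η * w * t + ω) := by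
    intro t
    simp only [hF]
    rw [add_sub_cancel_right, mul_div_cancel_left₀ _ ha, add_comm]
  have h2 : ∫ t : ℝ, F (η * w * t + ω) = |(η * w)⁻¹| • ∫ k, F k := by
    have : (fun t : ℝ => F (η * w * t + ω)) =
        fun t : ℝ => (fun y => F (y + ω)) (η * w * t) := by funext t; rfl
    rw [this, Measure.integral_comp_mul_left (fun y => F (y + ω)) (η * w)]
    congr 1
    exact integral_add_right_eq_self F ω
  simp only [h1]
  rw [h2, smul_eq_mul, abs_inv, abs_mul, abs_of_pos hη, one_div]

theorem stmt6 (g h : ℝ → ℂ) (hg : Integrable g)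
    (hh : MemLp h ⊤ (volume : Measure ℝ))
    (ω w δ : ℝ) (hw : w ≠ 0) (hδ : 0 < δ)
    (hvanish : ∀ᵐ k : ℝ, |k - ω| < δ → h k = 0) :
    (∀ η : ℝ, 0 < η →
      (1 / (η * |w|)) * ∫ k : ℝ, ‖g ((k - ω) / (η * w))‖ * ‖h k‖ =
        ∫ t : ℝ, ‖g t‖ * ‖h (ω + η * w * t)‖) ∧
    Tendsto (fun η : ℝ => ∫ t : ℝ, ‖g t‖ * ‖h (ω + η * w * t)‖)
      (nhdsWithin 0 (Set.Ioi 0)) (nhds 0) := by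
  constructor
  · intro η hη
    exact key_change g h ω w η hw hη
  -- set up a nice representative h' of h
  obtain ⟨h₀, h₀sm, h₀ae⟩ := hh.1
  set C : ℝ := (eLpNormEssSup h volume).toReal with hC
  have hCnn : 0 ≤ C := ENNReal.toReal_nonneg
  have hbound : ∀ᵐ k : ℝ, ‖h k‖ ≤ C := by
    have h1 : ∀ᵐ k : ℝ, (‖h k‖₊ : ENNReal) ≤ eLpNormEssSup h volume :=
      ae_le_eLpNormEssSup
    have htop : eLpNormEssSup h volume ≠ ⊤ := by
      have := hh.2; rw [eLpNorm_exponent_top] at this; exact this.ne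
    filter_upwards [h1] with k hk
    have : (‖h k‖₊ : ENNReal).toReal ≤ C := ENNReal.toReal_mono htop hk
    simpa using this
  set h' : ℝ → ℂ := fun k => if |k - ω| < δ ∨ C < ‖h₀ k‖ then 0 else h₀ k with hh'
  have h'meas : StronglyMeasurable h' := by
    apply StronglyMeasurable.ite _ stronglyMeasurable_const h₀sm
    apply MeasurableSet.union
    · exact measurableSet_lt ((measurable_id.sub measurable_const).abs) measurable_const
    · exact measurableSet_lt measurable_const h₀sm.measurable.norm
  have h'bdd : ∀ k, ‖h' k‖ ≤ C := by
    intro k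
    simp only [hh']
    split
    · simpa using hCnn
    · next hcond => push_neg at hcond; exact hcond.2
  have h'ae : h' =ᵐ[volume] h := by
    filter_upwards [hvanish, hbound, h₀ae] with k hk1 hk2 hk3
    simp only [hh']
    split
    · next hcond =>
      rcases hcond with hc | hc
      · exact (hk1 hc).symm
      · exact absurd (hk3 ▸ hk2) (not_le.mpr hc)
    · exact hk3.symm
  have h'small : ∀ t : ℝ, t ≠ 0 → ∀ η : ℝ, 0 < η → η < δ / (|w| * |t|) →
      h' (ω + η * w * t) = 0 := by
    intro t ht η hη hηlt
    have hwt : 0 < |w| * |t| := mul_pos (abs_pos.mpr hw) (abs_pos.mpr ht)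
    have : |ω + η * w * t - ω| < δ := by
      rw [add_sub_cancel_left, abs_mul, abs_mul, abs_of_pos hη, mul_assoc]
      calc η * (|w| * |t|) < δ / (|w| * |t|) * (|w| * |t|) := by
            exact mul_lt_mul_of_pos_right hηlt hwt
        _ = δ := div_mul_cancel₀ δ hwt.ne'
    simp only [hh', this, true_or, if_true]
  -- the integral with h equals the integral with h' for every η > 0
  have heq : ∀ η : ℝ, 0 < η →
      ∫ t : ℝ, ‖g t‖ * ‖h (ω + η * w * t)‖ = ∫ t : ℝ, ‖g t‖ * ‖h' (ω + η * w * t)‖ := by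
    intro η hη
    rw [← key_change g h ω w η hw hη, ← key_change g h' ω w η hw hη]
    congr 1
    apply integral_congr_ae
    filter_upwards [h'ae] with k hk
    rw [hk]
  -- dominated convergence for the h' integrals
  have hDCT : Tendsto (fun η : ℝ => ∫ t : ℝ, ‖g t‖ * ‖h' (ω + η * w * t)‖)
      (nhdsWithin 0 (Set.Ioi 0)) (nhds 0) := by
    have main := tendsto_integral_filter_of_dominated_convergence
      (μ := (volume : Measure ℝ)) (l := nhdsWithin 0 (Set.Ioi 0))
      (F := fun η t => ‖g t‖ * ‖h' (ω + η * w * t)‖) (f := fun _ => (0 : ℝ))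
      (fun t => C * ‖g t‖) ?_ ?_ ?_ ?_
    · simpa using main
    · apply Eventually.of_forall
      intro η
      apply AEStronglyMeasurable.mul hg.norm.aestronglyMeasurable
      apply StronglyMeasurable.aestronglyMeasurable
      apply StronglyMeasurable.norm
      exact h'meas.comp_measurable (by fun_prop)
    · apply Eventually.of_forall
      intro η
      apply Eventually.of_forall
      intro t
      rw [Real.norm_eq_abs, abs_of_nonneg (by positivity)]
      show ‖g t‖ * ‖h' (ω + η * w * t)‖ ≤ C * ‖g t‖
      rw [mul_comm C ‖g t‖]
      exact mul_le_mul_of_nonneg_left (h'bdd _) (norm_nonneg _)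
    · exact (hg.norm.const_mul C)
    · have : ∀ᵐ t : ℝ, t ≠ 0 := by
        refine (ae_iff.mpr ?_)
        simpa using Real.volume_singleton (a := (0 : ℝ))
      filter_upwards [this] with t ht
      have hpos : 0 < δ / (|w| * |t|) :=
        div_pos hδ (mul_pos (abs_pos.mpr hw) (abs_pos.mpr ht))
      apply Tendsto.congr' _ tendsto_const_nhds
      filter_upwards [Ioo_mem_nhdsGT_of_mem (Set.mem_Ico.mpr ⟨le_refl 0, hpos⟩)]
        with η hη
      rw [h'small t ht η hη.1 hη.2]
      simp
  apply hDCT.congr'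
  filter_upwards [self_mem_nhdsWithin] with η hη
  exact (heq η hη).symm
end

section
/- Let λ > 0, c ∈ ℂ, a ≥ 2, and let ω, f : ℝ → ℂ be continuous functions vanishing outside [−1, 1]. Suppose u : ℝ → ℂ is twice differentiable and satisfies u''(x) + (λ² + c ω(x)) u(x) = f(x) for all x ∈ ℝ, together with the radiation conditions u'(x) − iλ u(x) → 0 as x → +∞ and u'(x) + iλ u(x) → 0 as x → −∞. Then u satisfies the Robin boundary conditions u'(−a) + iλ u(−a) = 0 and u'(a) − iλ u(a) = 0. -/
open MeasureTheory Filter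

theorem stmt11 (lam : ℝ) (hlam : 0 < lam) (c : ℂ) (a : ℝ) (ha : 2 ≤ a)
    (ω f : ℝ → ℂ) (hω : Continuous ω) (hf : Continuous f)
    (hωsupp : ∀ x : ℝ, x ∉ Set.Icc (-1 : ℝ) 1 → ω x = 0)
    (hfsupp : ∀ x : ℝ, x ∉ Set.Icc (-1 : ℝ) 1 → f x = 0)
    (u u' u'' : ℝ → ℂ)
    (hderiv1 : ∀ x : ℝ, HasDerivAt u (u' x) x)
    (hderiv2 : ∀ x : ℝ, HasDerivAt u' (u'' x) x)
    (heq : ∀ x : ℝ, u'' x + ((lam : ℂ) ^ 2 + c * ω x) * u x = f x)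
    (hradp : Tendsto (fun x : ℝ => u' x - Complex.I * (lam : ℂ) * u x) atTop (nhds 0))
    (hradm : Tendsto (fun x : ℝ => u' x + Complex.I * (lam : ℂ) * u x) atBot (nhds 0)) :
    u' (-a) + Complex.I * (lam : ℂ) * u (-a) = 0 ∧
    u' a - Complex.I * (lam : ℂ) * u a = 0 := by
  -- the equation outside [-1,1]
  have houts : ∀ x : ℝ, (1 : ℝ) < |x| → u'' x = -((lam : ℂ) ^ 2) * u x := by
    intro x hx
    have hxmem : x ∉ Set.Icc (-1 : ℝ) 1 := by
      intro hmem
      rcases hmem with ⟨h1, h2⟩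
      have : |x| ≤ 1 := abs_le.mpr ⟨h1, h2⟩
      linarith
    have h1 := heq x
    rw [hωsupp x hxmem, hfsupp x hxmem] at h1
    simp at h1
    linear_combination h1
  -- derivative of x ↦ exp(I lam x)
  have hexp : ∀ x : ℝ, HasDerivAt (fun x : ℝ => Complex.exp (Complex.I * lam * x))
      (Complex.I * lam * Complex.exp (Complex.I * lam * x)) x := by
    intro x
    have h0 : HasDerivAt (fun x : ℝ => (x : ℂ)) 1 x := Complex.ofRealCLM.hasDerivAt
    have h1 : HasDerivAt (fun x : ℝ => Complex.I * lam * x) (Complex.I * lam) x := by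
      simpa using h0.const_mul (Complex.I * lam)
    simpa [mul_comm] using h1.cexp
  have hexpm : ∀ x : ℝ, HasDerivAt (fun x : ℝ => Complex.exp (-(Complex.I * lam) * x))
      (-(Complex.I * lam) * Complex.exp (-(Complex.I * lam) * x)) x := by
    intro x
    have h0 : HasDerivAt (fun x : ℝ => (x : ℂ)) 1 x := Complex.ofRealCLM.hasDerivAt
    have h1 : HasDerivAt (fun x : ℝ => -(Complex.I * lam) * x) (-(Complex.I * lam)) x := by
      simpa using h0.const_mul (-(Complex.I * lam))
    simpa [mul_comm] using h1.cexp
  have hnorm_exp : ∀ r x : ℝ, ‖Complex.exp (Complex.I * r * x)‖ = 1 := by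
    intro r x
    rw [Complex.norm_exp]
    simp
  constructor
  · -- left Robin condition, h = u' + iλu
    set h : ℝ → ℂ := fun x => u' x + Complex.I * lam * u x with hh
    have hhd : ∀ x : ℝ, HasDerivAt h (u'' x + Complex.I * lam * u' x) x := fun x =>
      (hderiv2 x).add ((hderiv1 x).const_mul _)
    set H : ℝ → ℂ := fun x => h x * Complex.exp (-(Complex.I * lam) * x) with hH
    have hHd0 : ∀ x : ℝ, x < -1 → HasDerivAt H 0 x := by
      intro x hx
      have habs : (1 : ℝ) < |x| := by rw [abs_of_neg (by linarith)]; linarith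
      have := ((hhd x).mul (hexpm x))
      refine this.congr_deriv (Eq.symm ?_)
      rw [houts x habs]
      ring_nf
      simp only [hh]
      ring_nf
      rw [Complex.I_sq]
      ring
    have hHc : Continuous H := by
      have : ∀ x : ℝ, HasDerivAt H ((u'' x + Complex.I * lam * u' x) *
          Complex.exp (-(Complex.I * lam) * x) + h x *
          (-(Complex.I * lam) * Complex.exp (-(Complex.I * lam) * x))) x :=
        fun x => (hhd x).mul (hexpm x)
      exact continuous_iff_continuousAt.mpr fun x => (this x).continuousAt
    have key : ∀ X ≤ -a, H (-a) = H X := by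
      intro X hX
      have := constant_of_has_deriv_right_zero (f := H) (a := X) (b := -a)
        (hHc.continuousOn)
        (fun x hx => by
          have : x < -1 := by
            have := hx.2
            simp only [Set.mem_Ico] at hx
            linarith [hx.2]
          exact ((hHd0 x this).hasDerivWithinAt))
      exact this (-a) ⟨hX, le_refl _⟩
    have hnormH : ∀ X : ℝ, ‖H X‖ = ‖h X‖ := by
      intro X
      rw [hH]
      simp only
      rw [norm_mul]
      have : ‖Complex.exp (-(Complex.I * lam) * X)‖ = 1 := by
        have := hnorm_exp (-lam) X
        convert this using 3
        push_cast
        ring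
      rw [this, mul_one]
    have htend : Tendsto (fun X : ℝ => ‖h X‖) atBot (nhds 0) := by
      simpa using hradm.norm
    have heventu : (fun X : ℝ => ‖h X‖) =ᶠ[atBot] fun _ => ‖h (-a)‖ := by
      filter_upwards [eventually_le_atBot (-a)] with X hX
      rw [← hnormH, ← key X hX, hnormH]
    have : Tendsto (fun _ : ℝ => ‖h (-a)‖) atBot (nhds 0) := htend.congr'
      (by filter_upwards [heventu] with X hX; rw [hX])
    have h0 : ‖h (-a)‖ = 0 := tendsto_nhds_unique tendsto_const_nhds this
    exact norm_eq_zero.mp h0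
  · -- right Robin condition, g = u' - iλu
    set g : ℝ → ℂ := fun x => u' x - Complex.I * lam * u x with hg
    have hgd : ∀ x : ℝ, HasDerivAt g (u'' x - Complex.I * lam * u' x) x := fun x =>
      (hderiv2 x).sub ((hderiv1 x).const_mul _)
    set G : ℝ → ℂ := fun x => g x * Complex.exp (Complex.I * lam * x) with hG
    have hGd0 : ∀ x : ℝ, 1 < x → HasDerivAt G 0 x := by
      intro x hx
      have habs : (1 : ℝ) < |x| := by rw [abs_of_pos (by linarith)]; linarith
      have := ((hgd x).mul (hexp x))
      refine this.congr_deriv (Eq.symm ?_)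
      rw [houts x habs]
      ring_nf
      simp only [hg]
      ring_nf
      rw [Complex.I_sq]
      ring
    have hGc : Continuous G := by
      have : ∀ x : ℝ, HasDerivAt G ((u'' x - Complex.I * lam * u' x) *
          Complex.exp (Complex.I * lam * x) + g x *
          (Complex.I * lam * Complex.exp (Complex.I * lam * x))) x :=
        fun x => (hgd x).mul (hexp x)
      exact continuous_iff_continuousAt.mpr fun x => (this x).continuousAt
    have key : ∀ X, a ≤ X → G X = G a := by
      intro X hX
      have := constant_of_has_deriv_right_zero (f := G) (a := a) (b := X)
        (hGc.continuousOn)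
        (fun x hx => by
          have : 1 < x := by
            simp only [Set.mem_Ico] at hx
            linarith [hx.1]
          exact ((hGd0 x this).hasDerivWithinAt))
      exact this X ⟨hX, le_refl _⟩
    have hnormG : ∀ X : ℝ, ‖G X‖ = ‖g X‖ := by
      intro X
      rw [hG]
      simp only
      rw [norm_mul]
      have : ‖Complex.exp (Complex.I * lam * X)‖ = 1 := hnorm_exp lam X
      rw [this, mul_one]
    have htend : Tendsto (fun X : ℝ => ‖g X‖) atTop (nhds 0) := by
      simpa using hradp.norm
    have heventu : (fun X : ℝ => ‖g X‖) =ᶠ[atTop] fun _ => ‖g a‖ := by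
      filter_upwards [eventually_ge_atTop a] with X hX
      rw [← hnormG, key X hX, hnormG]
    have : Tendsto (fun _ : ℝ => ‖g a‖) atTop (nhds 0) := htend.congr'
      (by filter_upwards [heventu] with X hX; rw [hX])
    have h0 : ‖g a‖ = 0 := tendsto_nhds_unique tendsto_const_nhds this
    exact norm_eq_zero.mp h0
end

section
/- Let λ > 0, c ∈ ℂ, a ≥ 2, and let ω, f : ℝ → ℂ be continuous functions vanishing outside [−1, 1]. Suppose v : [−a, a] → ℂ is twice continuously differentiable, satisfies v''(x) + (λ² + c ω(x)) v(x) = f(x) for all x ∈ [−a, a], and satisfies the Robin conditions v'(−a) + iλ v(−a) = 0 and v'(a) − iλ v(a) = 0. Define V : ℝ → ℂ by V(x) = v(x) for x ∈ [−a, a], V(x) = v(a) e^{iλ(x−a)} for x > a, and V(x) = v(−a) e^{−iλ(x+a)} for x < −a. Then V is twice continuously differentiable on ℝ, satisfies V''(x) + (λ² + c ω(x)) V(x) = f(x) for all x ∈ ℝ, and satisfies the radiation conditions: V'(x) − iλ V(x) = 0 for all x ≥ a and V'(x) + iλ V(x) = 0 for all x ≤ −a. -/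
open MeasureTheory Filter

theorem stmt12 (lam : ℝ) (hlam : 0 < lam) (c : ℂ) (a : ℝ) (ha : 2 ≤ a)
    (ω f : ℝ → ℂ) (hω : Continuous ω) (hf : Continuous f)
    (hωsupp : ∀ x : ℝ, x ∉ Set.Icc (-1 : ℝ) 1 → ω x = 0)
    (hfsupp : ∀ x : ℝ, x ∉ Set.Icc (-1 : ℝ) 1 → f x = 0)
    -- `v` is twice continuously differentiable on `[-a, a]`, with first and second
    -- derivatives `v'`, `v''` there
    (v v' v'' : ℝ → ℂ)
    (hderiv1 : ∀ x ∈ Set.Icc (-a) a, HasDerivWithinAt v (v' x) (Set.Icc (-a) a) x)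
    (hderiv2 : ∀ x ∈ Set.Icc (-a) a, HasDerivWithinAt v' (v'' x) (Set.Icc (-a) a) x)
    (hcont : ContinuousOn v'' (Set.Icc (-a) a))
    (heq : ∀ x ∈ Set.Icc (-a) a, v'' x + ((lam : ℂ) ^ 2 + c * ω x) * v x = f x)
    (hrobinm : v' (-a) + Complex.I * (lam : ℂ) * v (-a) = 0)
    (hrobinp : v' a - Complex.I * (lam : ℂ) * v a = 0)
    -- `V` is the piecewise extension of `v` by outgoing waves
    (V : ℝ → ℂ)
    (hV1 : ∀ x ∈ Set.Icc (-a) a, V x = v x)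
    (hV2 : ∀ x : ℝ, a < x → V x = v a * Complex.exp (Complex.I * (lam : ℂ) * ((x - a : ℝ) : ℂ)))
    (hV3 : ∀ x : ℝ, x < -a →
      V x = v (-a) * Complex.exp (-(Complex.I * (lam : ℂ) * ((x + a : ℝ) : ℂ)))) :
    ContDiff ℝ 2 V ∧
    (∀ x : ℝ, deriv (deriv V) x + ((lam : ℂ) ^ 2 + c * ω x) * V x = f x) ∧
    (∀ x : ℝ, a ≤ x → deriv V x - Complex.I * (lam : ℂ) * V x = 0) ∧
    (∀ x : ℝ, x ≤ -a → deriv V x + Complex.I * (lam : ℂ) * V x = 0) := by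
  have hna : -a < a := by linarith
  have hma : -a ∈ Set.Icc (-a) a := ⟨le_refl _, le_of_lt hna⟩
  have hpa : a ∈ Set.Icc (-a) a := ⟨le_of_lt hna, le_refl _⟩
  set Il : ℂ := Complex.I * (lam : ℂ) with hIl
  have hIl2 : Il * Il = -(lam : ℂ) ^ 2 := by
    have h := Complex.I_sq
    rw [hIl]; linear_combination (lam : ℂ) ^ 2 * h
  set gp : ℝ → ℂ := fun x => v a * Complex.exp (Il * ((x : ℂ) - a)) with hgp
  set gm : ℝ → ℂ := fun x => v (-a) * Complex.exp (-(Il * ((x : ℂ) + a))) with hgm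
  -- derivatives of the outgoing waves
  have hgp' : ∀ x : ℝ, HasDerivAt gp (Il * gp x) x := by
    intro x
    have h0 : HasDerivAt (fun y : ℝ => ((y : ℂ) - a)) 1 x := by
      simpa using (Complex.ofRealCLM.hasDerivAt (x := x)).sub_const (a : ℂ)
    have h1 : HasDerivAt (fun y : ℝ => Il * ((y : ℂ) - a)) Il x := by
      simpa using h0.const_mul Il
    have h2 := (h1.cexp).const_mul (v a)
    simp only [hgp]
    convert h2 using 1
    · rfl
    ring
  have hgm' : ∀ x : ℝ, HasDerivAt gm (-Il * gm x) x := by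
    intro x
    have h0 : HasDerivAt (fun y : ℝ => ((y : ℂ) + a)) 1 x := by
      simpa using (Complex.ofRealCLM.hasDerivAt (x := x)).add_const (a : ℂ)
    have h1 : HasDerivAt (fun y : ℝ => -(Il * ((y : ℂ) + a))) (-Il) x := by
      have h3 := (h0.const_mul Il).neg
      rw [mul_one] at h3
      exact h3
    have h2 := (h1.cexp).const_mul (v (-a))
    simp only [hgm]
    convert h2 using 1
    · rfl
    ring
  have hcgp : Continuous gp := continuous_iff_continuousAt.mpr fun y => (hgp' y).continuousAt
  have hcgm : Continuous gm := continuous_iff_continuousAt.mpr fun y => (hgm' y).continuousAt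
  -- boundary values
  have hgpa : gp a = v a := by simp [hgp]
  have hgma : gm (-a) = v (-a) := by
    simp only [hgm]
    push_cast
    simp
  have hva' : v' a = Il * v a := by linear_combination hrobinp
  have hvma' : v' (-a) = -Il * v (-a) := by linear_combination hrobinm
  -- vanishing of ω, f away from [-1,1]
  have hzero : ∀ x : ℝ, a ≤ |x| → ω x = 0 ∧ f x = 0 := by
    intro x hx
    have hx' : x ∉ Set.Icc (-1 : ℝ) 1 := by
      intro hmem
      rw [Set.mem_Icc] at hmem
      have h1 : |x| ≤ 1 := abs_le.mpr hmem
      linarith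
    exact ⟨hωsupp x hx', hfsupp x hx'⟩
  have hva'' : v'' a = -(lam : ℂ) ^ 2 * v a := by
    obtain ⟨hω0, hf0⟩ := hzero a (le_abs_self a)
    have h := heq a hpa
    rw [hω0, hf0] at h
    linear_combination h
  have hvma'' : v'' (-a) = -(lam : ℂ) ^ 2 * v (-a) := by
    obtain ⟨hω0, hf0⟩ := hzero (-a) (by rw [abs_neg]; exact le_abs_self a)
    have h := heq (-a) hma
    rw [hω0, hf0] at h
    linear_combination h
  -- V agrees with the outgoing waves on the closed half-lines
  have hVgp : ∀ x : ℝ, a ≤ x → V x = gp x := by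
    intro x hx
    rcases eq_or_lt_of_le hx with h | h
    · rw [← h, hV1 a hpa, hgpa]
    · rw [hV2 x h]; simp only [hgp]; norm_cast
  have hVgm : ∀ x : ℝ, x ≤ -a → V x = gm x := by
    intro x hx
    rcases eq_or_lt_of_le hx with h | h
    · rw [h, hV1 (-a) hma, hgma]
    · rw [hV3 x h]; simp only [hgm]; norm_cast
  -- the candidate first and second derivatives of V
  set W1 : ℝ → ℂ := fun x =>
    if x < -a then -Il * gm x else if x ≤ a then v' x else Il * gp x with hW1
  set W2 : ℝ → ℂ := fun x =>
    if x < -a then -(lam : ℂ) ^ 2 * gm x else if x ≤ a then v'' x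
      else -(lam : ℂ) ^ 2 * gp x with hW2
  have hW1v : ∀ x ∈ Set.Icc (-a) a, W1 x = v' x := by
    intro x hx
    simp only [hW1]
    rw [if_neg (not_lt.mpr hx.1), if_pos hx.2]
  have hW2v : ∀ x ∈ Set.Icc (-a) a, W2 x = v'' x := by
    intro x hx
    simp only [hW2]
    rw [if_neg (not_lt.mpr hx.1), if_pos hx.2]
  have hW1gp : ∀ x : ℝ, a ≤ x → W1 x = Il * gp x := by
    intro x hx
    rcases eq_or_lt_of_le hx with h | h
    · rw [← h, hW1v a hpa, hva', hgpa]
    · simp only [hW1]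
      rw [if_neg (by linarith : ¬ x < -a), if_neg (not_le.mpr h)]
  have hW1gm : ∀ x : ℝ, x ≤ -a → W1 x = -Il * gm x := by
    intro x hx
    rcases eq_or_lt_of_le hx with h | h
    · rw [h, hW1v (-a) hma, hvma', hgma]
    · simp only [hW1]
      rw [if_pos h]
  have hW2gp : ∀ x : ℝ, a ≤ x → W2 x = -(lam : ℂ) ^ 2 * gp x := by
    intro x hx
    rcases eq_or_lt_of_le hx with h | h
    · rw [← h, hW2v a hpa, hva'', hgpa]
    · simp only [hW2]
      rw [if_neg (by linarith : ¬ x < -a), if_neg (not_le.mpr h)]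
  have hW2gm : ∀ x : ℝ, x ≤ -a → W2 x = -(lam : ℂ) ^ 2 * gm x := by
    intro x hx
    rcases eq_or_lt_of_le hx with h | h
    · rw [h, hW2v (-a) hma, hvma'', hgma]
    · simp only [hW2]
      rw [if_pos h]
  -- general gluing lemma for derivatives
  have key : ∀ (F G u u' : ℝ → ℂ) (cp cm : ℂ),
      (∀ x ∈ Set.Icc (-a) a, HasDerivWithinAt u (u' x) (Set.Icc (-a) a) x) →
      (∀ x ∈ Set.Icc (-a) a, F x = u x) →
      (∀ x : ℝ, a ≤ x → F x = cp * gp x) →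
      (∀ x : ℝ, x ≤ -a → F x = cm * gm x) →
      (∀ x ∈ Set.Icc (-a) a, G x = u' x) →
      (∀ x : ℝ, a ≤ x → G x = cp * (Il * gp x)) →
      (∀ x : ℝ, x ≤ -a → G x = cm * (-Il * gm x)) →
      ∀ x : ℝ, HasDerivAt F (G x) x := by
    intro F G u u' cp cm hd hFu hFp hFm hGu hGp hGm x
    have hdgp : ∀ y : ℝ, HasDerivAt (fun t => cp * gp t) (cp * (Il * gp y)) y :=
      fun y => (hgp' y).const_mul cp
    have hdgm : ∀ y : ℝ, HasDerivAt (fun t => cm * gm t) (cm * (-Il * gm y)) y :=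
      fun y => (hgm' y).const_mul cm
    rcases lt_trichotomy x (-a) with hx | hx | hx
    · have hev : F =ᶠ[nhds x] fun t => cm * gm t := by
        filter_upwards [Iio_mem_nhds hx] with y hy
        exact hFm y (le_of_lt hy)
      rw [hGm x (le_of_lt hx)]
      exact (hdgm x).congr_of_eventuallyEq hev
    · have hxm : x ∈ Set.Icc (-a) a := by rw [hx]; exact hma
      have hxle : x ≤ -a := le_of_eq hx
      have hLeft : HasDerivWithinAt F (G x) (Set.Iic x) x := by
        rw [hGm x hxle]
        exact ((hdgm x).hasDerivWithinAt).congr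
          (fun y hy => hFm y (le_trans hy hxle)) (hFm x hxle)
      have hRight : HasDerivWithinAt F (G x) (Set.Ici x) x := by
        rw [hGu x hxm]
        have h1 : HasDerivWithinAt F (u' x) (Set.Icc (-a) a) x :=
          (hd x hxm).congr (fun y hy => hFu y hy) (hFu x hxm)
        refine h1.mono_of_mem_nhdsWithin ?_
        refine mem_nhdsWithin.mpr ⟨Set.Iio a, isOpen_Iio, by rw [hx]; exact hna, ?_⟩
        rintro y ⟨hy1, hy2⟩
        exact ⟨hx ▸ hy2, le_of_lt hy1⟩
      have h2 := hLeft.union hRight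
      rw [Set.Iic_union_Ici, hasDerivWithinAt_univ] at h2
      exact h2
    · rcases lt_trichotomy x a with hx2 | hx2 | hx2
      · have hmem : x ∈ Set.Icc (-a) a := ⟨le_of_lt hx, le_of_lt hx2⟩
        have h1 : HasDerivAt u (u' x) x := (hd x hmem).hasDerivAt (Icc_mem_nhds hx hx2)
        rw [hGu x hmem]
        refine h1.congr_of_eventuallyEq ?_
        filter_upwards [Icc_mem_nhds hx hx2] with y hy
        exact hFu y hy
      · have hxm : x ∈ Set.Icc (-a) a := by rw [hx2]; exact hpa
        have hxge : a ≤ x := le_of_eq hx2.symm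
        have hLeft : HasDerivWithinAt F (G x) (Set.Iic x) x := by
          rw [hGu x hxm]
          have h1 : HasDerivWithinAt F (u' x) (Set.Icc (-a) a) x :=
            (hd x hxm).congr (fun y hy => hFu y hy) (hFu x hxm)
          refine h1.mono_of_mem_nhdsWithin ?_
          refine mem_nhdsWithin.mpr ⟨Set.Ioi (-a), isOpen_Ioi, by rw [hx2]; exact hna, ?_⟩
          rintro y ⟨hy1, hy2⟩
          exact ⟨le_of_lt hy1, le_trans hy2 (le_of_eq hx2)⟩
        have hRight : HasDerivWithinAt F (G x) (Set.Ici x) x := by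
          rw [hGp x hxge]
          exact ((hdgp x).hasDerivWithinAt).congr
            (fun y hy => hFp y (le_trans hxge hy)) (hFp x hxge)
        have h2 := hLeft.union hRight
        rw [Set.Iic_union_Ici, hasDerivWithinAt_univ] at h2
        exact h2
      · have hev : F =ᶠ[nhds x] fun t => cp * gp t := by
          filter_upwards [Ioi_mem_nhds hx2] with y hy
          exact hFp y (le_of_lt hy)
        rw [hGp x (le_of_lt hx2)]
        exact (hdgp x).congr_of_eventuallyEq hev
  have hA : ∀ x : ℝ, HasDerivAt V (W1 x) x := by
    refine key V W1 v v' 1 1 hderiv1 hV1 ?_ ?_ hW1v ?_ ?_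
    · intro x hx; rw [hVgp x hx, one_mul]
    · intro x hx; rw [hVgm x hx, one_mul]
    · intro x hx; rw [hW1gp x hx, one_mul]
    · intro x hx; rw [hW1gm x hx, one_mul]
  have hB : ∀ x : ℝ, HasDerivAt W1 (W2 x) x := by
    refine key W1 W2 v' v'' Il (-Il) hderiv2 hW1v hW1gp hW1gm hW2v ?_ ?_
    · intro x hx; rw [hW2gp x hx]; linear_combination (-gp x) * hIl2
    · intro x hx; rw [hW2gm x hx]; linear_combination (-gm x) * hIl2
  -- continuity of the second derivative
  have hC : Continuous W2 := by
    have hOn1 : ContinuousOn W2 (Set.Iic (-a)) :=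
      ((continuous_const.mul hcgm).continuousOn).congr fun y hy => hW2gm y hy
    have hOn2 : ContinuousOn W2 (Set.Icc (-a) a) := hcont.congr fun y hy => hW2v y hy
    have hOn3 : ContinuousOn W2 (Set.Ici a) :=
      ((continuous_const.mul hcgp).continuousOn).congr fun y hy => hW2gp y hy
    rw [continuous_iff_continuousAt]
    intro x
    have t1 : ContinuousWithinAt W2 (Set.Iic (-a)) x := by
      by_cases hx : x ∈ Set.Iic (-a)
      · exact hOn1 x hx
      · exact continuousWithinAt_of_notMem_closure
          (by rwa [IsClosed.closure_eq isClosed_Iic])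
    have t2 : ContinuousWithinAt W2 (Set.Icc (-a) a) x := by
      by_cases hx : x ∈ Set.Icc (-a) a
      · exact hOn2 x hx
      · exact continuousWithinAt_of_notMem_closure
          (by rwa [IsClosed.closure_eq isClosed_Icc])
    have t3 : ContinuousWithinAt W2 (Set.Ici a) x := by
      by_cases hx : x ∈ Set.Ici a
      · exact hOn3 x hx
      · exact continuousWithinAt_of_notMem_closure
          (by rwa [IsClosed.closure_eq isClosed_Ici])
    have t4 := (t1.union t2).union t3
    have huniv : Set.Iic (-a) ∪ Set.Icc (-a) a ∪ Set.Ici a = Set.univ := by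
      ext y
      simp only [Set.mem_union, Set.mem_Iic, Set.mem_Icc, Set.mem_Ici, Set.mem_univ, iff_true]
      rcases le_total y (-a) with h | h
      · exact Or.inl (Or.inl h)
      · rcases le_total y a with h2 | h2
        · exact Or.inl (Or.inr ⟨h, h2⟩)
        · exact Or.inr h2
    rw [huniv, continuousWithinAt_univ] at t4
    exact t4
  have hdV : deriv V = W1 := funext fun y => (hA y).deriv
  have hdW1 : deriv W1 = W2 := funext fun y => (hB y).deriv
  have hdiffV : Differentiable ℝ V := fun y => (hA y).differentiableAt
  have hdiffW1 : Differentiable ℝ W1 := fun y => (hB y).differentiableAt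
  refine ⟨?_, ?_, ?_, ?_⟩
  · rw [show (2 : WithTop ℕ∞) = 1 + 1 from rfl, contDiff_succ_iff_deriv]
    refine ⟨hdiffV, by simp, ?_⟩
    rw [hdV, contDiff_one_iff_deriv, hdW1]
    exact ⟨hdiffW1, hC⟩
  · intro x
    rw [hdV, hdW1]
    by_cases hx1 : x ∈ Set.Icc (-a) a
    · rw [hW2v x hx1, hV1 x hx1]
      exact heq x hx1
    · rw [Set.mem_Icc, not_and_or, not_le, not_le] at hx1
      rcases hx1 with hx | hx
      · obtain ⟨hω0, hf0⟩ := hzero x (by rw [abs_of_nonpos (by linarith)]; linarith)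
        rw [hW2gm x (le_of_lt hx), hVgm x (le_of_lt hx), hω0, hf0]
        ring
      · obtain ⟨hω0, hf0⟩ := hzero x (by rw [abs_of_nonneg (by linarith)]; linarith)
        rw [hW2gp x (le_of_lt hx), hVgp x (le_of_lt hx), hω0, hf0]
        ring
  · intro x hx
    rw [hdV, hW1gp x hx, hVgp x hx]
    ring
  · intro x hx
    rw [hdV, hW1gm x hx, hVgm x hx]
    ring
end

section
/- Let λ > 0 and let f : ℝ → ℂ be continuous with support contained in [−1, 1]. Define u(x) = (1/(2iλ)) ∫_{−1}^{1} f(s) e^{iλ|x−s|} ds. Then u is twice continuously differentiable on ℝ, u''(x) + λ² u(x) = f(x) for all x ∈ ℝ, and u satisfies the outgoing conditions u'(x) − iλ u(x) = 0 for all x ≥ 1 and u'(x) + iλ u(x) = 0 for all x ≤ −1. -/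
open MeasureTheory Filter

/-- An interval integral vanishes if the integrand vanishes on the open interval. -/
lemma stmt13_vanish {g : ℝ → ℂ} {a b : ℝ}
    (h : ∀ s ∈ Set.Ioo (min a b) (max a b), g s = 0) :
    ∫ s in a..b, g s = 0 := by
  have hae : ∀ᵐ s : ℝ, s ≠ max a b := by
    have : (volume ({max a b} : Set ℝ)) = 0 := measure_singleton _
    filter_upwards [measure_eq_zero_iff_ae_notMem.mp this] with s hs
    simpa using hs
  have : (∫ s in a..b, g s) = ∫ s in a..b, (0 : ℂ) := by
    apply intervalIntegral.integral_congr_ae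
    filter_upwards [hae] with s hs hmem
    rw [Set.uIoc] at hmem
    exact h s ⟨hmem.1, lt_of_le_of_ne hmem.2 hs⟩
  simpa using this

theorem stmt13 (lam : ℝ) (hlam : 0 < lam) (f : ℝ → ℂ) (hf : Continuous f)
    (hsupp : ∀ x : ℝ, x ∉ Set.Icc (-1 : ℝ) 1 → f x = 0)
    (u : ℝ → ℂ)
    (hu : ∀ x : ℝ, u x = (1 / (2 * Complex.I * (lam : ℂ))) *
        ∫ s in (-1 : ℝ)..1, f s * Complex.exp (Complex.I * (lam : ℂ) * ((|x - s| : ℝ) : ℂ))) :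
    ContDiff ℝ 2 u ∧
    (∀ x : ℝ, deriv (deriv u) x + (lam : ℂ) ^ 2 * u x = f x) ∧
    (∀ x : ℝ, 1 ≤ x → deriv u x - Complex.I * (lam : ℂ) * u x = 0) ∧
    (∀ x : ℝ, x ≤ -1 → deriv u x + Complex.I * (lam : ℂ) * u x = 0) := by
  have ha : Complex.I * (lam : ℂ) ≠ 0 := by
    apply mul_ne_zero Complex.I_ne_zero
    exact_mod_cast hlam.ne'
  set a : ℂ := Complex.I * (lam : ℂ) with ha_def
  set c0 : ℂ := 1 / (2 * Complex.I * (lam : ℂ)) with hc0_def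
  have hz : (2 * Complex.I * (lam : ℂ)) ≠ 0 := by
    refine mul_ne_zero (mul_ne_zero two_ne_zero Complex.I_ne_zero) ?_
    exact_mod_cast hlam.ne'
  have hc0 : c0 * (2 * a) = 1 := by
    have h2a : (2 : ℂ) * a = 2 * Complex.I * (lam : ℂ) := by rw [ha_def]; ring
    rw [h2a, hc0_def]
    exact one_div_mul_cancel hz
  set g1 : ℝ → ℂ := fun s => f s * Complex.exp (-(a * s)) with hg1_def
  set g2 : ℝ → ℂ := fun s => f s * Complex.exp (a * s) with hg2_def
  have hg1c : Continuous g1 := by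
    apply hf.mul
    exact Complex.continuous_exp.comp ((continuous_const.mul Complex.continuous_ofReal).neg)
  have hg2c : Continuous g2 := by
    apply hf.mul
    exact Complex.continuous_exp.comp (continuous_const.mul Complex.continuous_ofReal)
  set F : ℝ → ℂ := fun x => ∫ s in (-1 : ℝ)..x, g1 s with hF_def
  set G : ℝ → ℂ := fun x => ∫ s in x..(1 : ℝ), g2 s with hG_def
  set E : ℝ → ℂ := fun x => Complex.exp (a * x) with hE_def
  set E' : ℝ → ℂ := fun x => Complex.exp (-(a * x)) with hE'_def
  have hEE' : ∀ x : ℝ, E x * E' x = 1 := by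
    intro x
    rw [hE_def, hE'_def, ← Complex.exp_add]
    simp
  -- derivatives of the building blocks
  have hF : ∀ x : ℝ, HasDerivAt F (g1 x) x := fun x =>
    (hg1c.integral_hasStrictDerivAt (-1) x).hasDerivAt
  have hG : ∀ x : ℝ, HasDerivAt G (-(g2 x)) x := fun x =>
    (intervalIntegral.integral_hasStrictDerivAt_left (hg2c.intervalIntegrable x 1)
      (hg2c.stronglyMeasurableAtFilter _ _) hg2c.continuousAt).hasDerivAt
  have hid : ∀ x : ℝ, HasDerivAt (fun y : ℝ => a * (y : ℂ)) a x := by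
    intro x
    simpa using (Complex.ofRealCLM.hasDerivAt (x := x)).const_mul a
  have hE : ∀ x : ℝ, HasDerivAt E (a * E x) x := by
    intro x
    simpa [hE_def, mul_comm] using (hid x).cexp
  have hE' : ∀ x : ℝ, HasDerivAt E' (-a * E' x) x := by
    intro x
    simpa [hE'_def, mul_comm] using (hid x).neg.cexp
  -- the key formula : u = w
  set w : ℝ → ℂ := fun x => c0 * (E x * F x + E' x * G x) with hw_def
  have hvanish : ∀ p q : ℝ, (∀ s ∈ Set.Ioo (min p q) (max p q), f s = 0) →
      (∫ s in p..q, g1 s) = 0 ∧ (∫ s in p..q, g2 s) = 0 := by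
    intro p q h
    constructor <;> [skip; skip] <;>
      · apply stmt13_vanish
        intro s hs
        simp [hg1_def, hg2_def, h s hs]
  have hueq : u = w := by
    funext x
    rw [hu x, hw_def]
    congr 1
    set c : ℝ := max (-1) (min x 1) with hc_def
    have hc1 : (-1 : ℝ) ≤ c := le_max_left _ _
    have hc2 : c ≤ 1 := max_le (by norm_num) (min_le_right _ _)
    -- integrability of the full integrand
    have hkc : Continuous fun s : ℝ =>
        f s * Complex.exp (Complex.I * (lam : ℂ) * ((|x - s| : ℝ) : ℂ)) := by
      apply hf.mul
      apply Complex.continuous_exp.comp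
      exact continuous_const.mul
        (Complex.continuous_ofReal.comp ((continuous_const.sub continuous_id).abs))
    have hsplit : (∫ s in (-1 : ℝ)..1,
          f s * Complex.exp (Complex.I * (lam : ℂ) * ((|x - s| : ℝ) : ℂ)))
        = (∫ s in (-1 : ℝ)..c, f s * Complex.exp (Complex.I * (lam : ℂ) * ((|x - s| : ℝ) : ℂ)))
        + ∫ s in c..(1 : ℝ), f s * Complex.exp (Complex.I * (lam : ℂ) * ((|x - s| : ℝ) : ℂ)) :=
      (intervalIntegral.integral_add_adjacent_intervals
        (hkc.intervalIntegrable _ _) (hkc.intervalIntegrable _ _)).symm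
    have hfirst : (∫ s in (-1 : ℝ)..c,
          f s * Complex.exp (Complex.I * (lam : ℂ) * ((|x - s| : ℝ) : ℂ)))
        = E x * F x := by
      have hcong : (∫ s in (-1 : ℝ)..c,
            f s * Complex.exp (Complex.I * (lam : ℂ) * ((|x - s| : ℝ) : ℂ)))
          = ∫ s in (-1 : ℝ)..c, E x * g1 s := by
        apply intervalIntegral.integral_congr_ae
        apply Filter.Eventually.of_forall
        intro s hs
        rw [Set.uIoc] at hs
        have hs1 : -1 < s := lt_of_le_of_lt (by simp [hc1]) hs.1
        have hs2 : s ≤ c := le_trans hs.2 (by simp [hc1])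
        have hsx : s ≤ x := by
          rcases le_or_gt (-1 : ℝ) x with hx | hx
          · have : c ≤ x := max_le (by linarith) (min_le_left _ _)
            linarith
          · have : c = -1 := by
              rw [hc_def]
              rw [min_eq_left (by linarith : x ≤ 1)]
              exact max_eq_left (by linarith)
            rw [this] at hs2; linarith
        have habs : |x - s| = x - s := abs_of_nonneg (by linarith)
        rw [habs]
        rw [hg1_def, hE_def]
        push_cast
        rw [← ha_def]
        have hexp : Complex.exp (a * ((x : ℂ) - (s : ℂ)))
            = Complex.exp (a * (x : ℂ)) * Complex.exp (-(a * (s : ℂ))) := by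
          rw [← Complex.exp_add]
          congr 1
          ring
        rw [hexp]
        ring
      rw [hcong, intervalIntegral.integral_const_mul]
      congr 1
      have hzero : (∫ s in c..x, g1 s) = 0 := by
        apply (hvanish c x ?_).1
        intro s hs
        apply hsupp
        intro hmem
        rcases le_or_gt x (-1 : ℝ) with hx | hx
        · have hcm : c = -1 := by
            rw [hc_def, min_eq_left (by linarith : x ≤ 1)]
            exact max_eq_left (by linarith)
          rw [hcm] at hs
          have : max (-1 : ℝ) x = -1 := max_eq_left hx
          rw [this] at hs
          exact absurd hmem.1 (not_le.mpr hs.2)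
        · rcases le_or_gt x 1 with hx2 | hx2
          · have hcm : c = x := by
              rw [hc_def, min_eq_left hx2]
              exact max_eq_right (by linarith)
            rw [hcm, min_self, max_self, Set.Ioo_self] at hs
            exact hs.elim
          · have hcm : c = 1 := by
              rw [hc_def, min_eq_right (by linarith : (1:ℝ) ≤ x)]
              exact max_eq_right (by norm_num)
            rw [hcm] at hs
            have : min (1 : ℝ) x = 1 := min_eq_left (by linarith)
            rw [this] at hs
            exact absurd hmem.2 (not_le.mpr hs.1)
      rw [hF_def]
      have := intervalIntegral.integral_add_adjacent_intervals
        (hg1c.intervalIntegrable (μ := volume) (-1) c) (hg1c.intervalIntegrable (μ := volume) c x)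
      rw [hzero, add_zero] at this
      exact this
    have hsecond : (∫ s in c..(1 : ℝ),
          f s * Complex.exp (Complex.I * (lam : ℂ) * ((|x - s| : ℝ) : ℂ)))
        = E' x * G x := by
      have hcong : (∫ s in c..(1 : ℝ),
            f s * Complex.exp (Complex.I * (lam : ℂ) * ((|x - s| : ℝ) : ℂ)))
          = ∫ s in c..(1 : ℝ), E' x * g2 s := by
        apply intervalIntegral.integral_congr_ae
        apply Filter.Eventually.of_forall
        intro s hs
        rw [Set.uIoc] at hs
        have hs1 : c < s := lt_of_le_of_lt (by simp [hc2]) hs.1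
        have hs2 : s ≤ 1 := le_trans hs.2 (by simp [hc2])
        have hsx : x ≤ s := by
          rcases le_or_gt x 1 with hx | hx
          · have : x ≤ c := by
              rw [hc_def]
              exact le_max_of_le_right (le_min le_rfl hx)
            linarith
          · have : c = 1 := by
              rw [hc_def, min_eq_right (by linarith : (1:ℝ) ≤ x)]
              exact max_eq_right (by norm_num)
            rw [this] at hs1; linarith
        have habs : |x - s| = s - x := by
          rw [abs_of_nonpos (by linarith)]; ring
        rw [habs]
        rw [hg2_def, hE'_def]
        push_cast
        rw [← ha_def]
        have hexp : Complex.exp (a * ((s : ℂ) - (x : ℂ)))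
            = Complex.exp (-(a * (x : ℂ))) * Complex.exp (a * (s : ℂ)) := by
          rw [← Complex.exp_add]
          congr 1
          ring
        rw [hexp]
        ring
      rw [hcong, intervalIntegral.integral_const_mul]
      congr 1
      have hzero : (∫ s in x..c, g2 s) = 0 := by
        apply (hvanish x c ?_).2
        intro s hs
        apply hsupp
        intro hmem
        rcases le_or_gt x (-1 : ℝ) with hx | hx
        · have hcm : c = -1 := by
            rw [hc_def, min_eq_left (by linarith : x ≤ 1)]
            exact max_eq_left (by linarith)
          rw [hcm] at hs
          have : min x (-1 : ℝ) = x := min_eq_left hx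
          have h2 : max x (-1 : ℝ) = -1 := max_eq_right hx
          rw [this, h2] at hs
          exact absurd hmem.1 (not_le.mpr hs.2)
        · rcases le_or_gt x 1 with hx2 | hx2
          · have hcm : c = x := by
              rw [hc_def, min_eq_left hx2]
              exact max_eq_right (by linarith)
            rw [hcm, min_self, max_self, Set.Ioo_self] at hs
            exact hs.elim
          · have hcm : c = 1 := by
              rw [hc_def, min_eq_right (by linarith : (1:ℝ) ≤ x)]
              exact max_eq_right (by norm_num)
            rw [hcm] at hs
            have h1 : min x (1 : ℝ) = 1 := min_eq_right (by linarith)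
            have h2 : max x (1 : ℝ) = x := max_eq_left (by linarith)
            rw [h1, h2] at hs
            exact absurd hmem.2 (not_le.mpr hs.1)
      rw [hG_def]
      have := intervalIntegral.integral_add_adjacent_intervals
        (hg2c.intervalIntegrable (μ := volume) x c) (hg2c.intervalIntegrable (μ := volume) c 1)
      rw [hzero, zero_add] at this
      exact this
    rw [hsplit, hfirst, hsecond]
  -- derivative of w
  set v : ℝ → ℂ := fun x => (E x * F x - E' x * G x) / 2 with hv_def
  have hw' : ∀ x : ℝ, HasDerivAt w (v x) x := by
    intro x
    have h1 := (((hE x).mul (hF x)).add ((hE' x).mul (hG x))).const_mul c0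
    refine h1.congr_deriv (Eq.symm ?_)
    have hp := hEE' x
    have hg1x : g1 x = f x * E' x := rfl
    have hg2x : g2 x = f x * E x := by
      rw [hg2_def, hE_def]
    simp only [hv_def, hg1x, hg2x]
    linear_combination (-(E x * F x - E' x * G x) / 2) * hc0
  have hv' : ∀ x : ℝ, HasDerivAt v (f x - (lam : ℂ) ^ 2 * w x) x := by
    intro x
    have h1 := ((((hE x).mul (hF x)).sub ((hE' x).mul (hG x))).div_const 2)
    refine h1.congr_deriv (Eq.symm ?_)
    have hp := hEE' x
    have hg1x : g1 x = f x * E' x := rfl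
    have hg2x : g2 x = f x * E x := by rw [hg2_def, hE_def]
    have hlam2 : (lam : ℂ) ^ 2 = -(a * a) := by
      rw [ha_def]
      linear_combination ((lam : ℂ) ^ 2) * Complex.I_mul_I
    simp only [hg1x, hg2x, hw_def, hlam2]
    linear_combination (a / 2 * (E x * F x + E' x * G x)) * hc0 + (-(f x)) * hp
  have hderivw : deriv w = v := funext fun x => (hw' x).deriv
  have hderivv : ∀ x, deriv v x = f x - (lam : ℂ) ^ 2 * w x := fun x => (hv' x).deriv
  rw [hueq]
  refine ⟨?_, ?_, ?_, ?_⟩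
  · -- ContDiff ℝ 2 w
    rw [show (2 : WithTop ℕ∞) = 1 + 1 from rfl, contDiff_succ_iff_deriv]
    refine ⟨fun x => (hw' x).differentiableAt, by simp, ?_⟩
    rw [hderivw, contDiff_one_iff_deriv]
    refine ⟨fun x => (hv' x).differentiableAt, ?_⟩
    have hdv : deriv v = fun x => f x - (lam : ℂ) ^ 2 * w x := funext hderivv
    rw [hdv]
    apply hf.sub
    apply continuous_const.mul
    have hwdiff : Differentiable ℝ w := fun x => (hw' x).differentiableAt
    exact hwdiff.continuous
  · intro x
    rw [hderivw, hderivv x]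
    ring
  · intro x hx
    rw [hderivw]
    have hG0 : G x = 0 := by
      apply (hvanish x 1 ?_).2
      intro s hs
      apply hsupp
      intro hmem
      have h1 : min x (1 : ℝ) = 1 := min_eq_right hx
      have h2 : max x (1 : ℝ) = x := max_eq_left hx
      rw [h1, h2] at hs
      exact absurd hmem.2 (not_le.mpr hs.1)
    simp only [hv_def, hw_def, hG0]
    linear_combination (-(E x * F x) / 2) * hc0
  · intro x hx
    rw [hderivw]
    have hF0 : F x = 0 := by
      apply (hvanish (-1) x ?_).1
      intro s hs
      apply hsupp
      intro hmem
      have h1 : min (-1 : ℝ) x = x := min_eq_right hx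
      have h2 : max (-1 : ℝ) x = -1 := max_eq_left hx
      rw [h1, h2] at hs
      exact absurd hmem.1 (not_le.mpr hs.2)
    simp only [hv_def, hw_def, hF0]
    linear_combination (E' x * G x / 2) * hc0
end

section
/- Let λ > 0, c ∈ ℂ, and let ω, f : ℝ → ℂ be continuous functions vanishing outside [−1, 1]. Suppose u : ℝ → ℂ is continuous and satisfies the integral equation u(x) = (1/(2iλ)) ∫_{−1}^{1} e^{iλ|x−s|} ( f(s) − c ω(s) u(s) ) ds for all x ∈ ℝ. Then u is twice continuously differentiable, u''(x) + (λ² + c ω(x)) u(x) = f(x) for all x ∈ ℝ, and u satisfies the outgoing conditions u'(x) − iλ u(x) = 0 for all x ≥ 1 and u'(x) + iλ u(x) = 0 for all x ≤ −1. -/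
open MeasureTheory Filter

theorem stmt15 (lam : ℝ) (hlam : 0 < lam) (c : ℂ)
    (ω f : ℝ → ℂ) (hω : Continuous ω) (hf : Continuous f)
    (hωsupp : ∀ x : ℝ, x ∉ Set.Icc (-1 : ℝ) 1 → ω x = 0)
    (hfsupp : ∀ x : ℝ, x ∉ Set.Icc (-1 : ℝ) 1 → f x = 0)
    (u : ℝ → ℂ) (hu : Continuous u)
    (hinteq : ∀ x : ℝ, u x = (1 / (2 * Complex.I * (lam : ℂ))) *
        ∫ s in (-1 : ℝ)..1,
          Complex.exp (Complex.I * (lam : ℂ) * ((|x - s| : ℝ) : ℂ)) * (f s - c * ω s * u s)) :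
    ContDiff ℝ 2 u ∧
    (∀ x : ℝ, deriv (deriv u) x + ((lam : ℂ) ^ 2 + c * ω x) * u x = f x) ∧
    (∀ x : ℝ, 1 ≤ x → deriv u x - Complex.I * (lam : ℂ) * u x = 0) ∧
    (∀ x : ℝ, x ≤ -1 → deriv u x + Complex.I * (lam : ℂ) * u x = 0) := by
  set m : ℂ := Complex.I * (lam : ℂ) with hm
  have hm0 : m ≠ 0 := by
    rw [hm]
    exact mul_ne_zero Complex.I_ne_zero (by exact_mod_cast hlam.ne')
  set g : ℝ → ℂ := fun s => f s - c * ω s * u s with hgdef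
  have hgc : Continuous g := hf.sub ((continuous_const.mul hω).mul hu)
  have hg0 : ∀ s : ℝ, s ∉ Set.Icc (-1 : ℝ) 1 → g s = 0 := by
    intro s hs
    simp only [hgdef, hfsupp s hs, hωsupp s hs]
    ring
  have hc1 : Continuous fun s : ℝ => Complex.exp (-(m * s)) * g s :=
    (Complex.continuous_exp.comp
      ((continuous_const.mul Complex.continuous_ofReal).neg)).mul hgc
  have hc2 : Continuous fun s : ℝ => Complex.exp (m * s) * g s :=
    (Complex.continuous_exp.comp
      (continuous_const.mul Complex.continuous_ofReal)).mul hgc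
  have hck : ∀ x : ℝ, Continuous fun s : ℝ => Complex.exp (m * ((|x - s| : ℝ) : ℂ)) * g s := by
    intro x
    exact (Complex.continuous_exp.comp (continuous_const.mul
      (Complex.continuous_ofReal.comp ((continuous_const.sub continuous_id).abs)))).mul hgc
  set F : ℝ → ℂ := fun x => ∫ s in (-1 : ℝ)..x, Complex.exp (-(m * s)) * g s with hFdef
  set G : ℝ → ℂ := fun x => ∫ s in x..(1 : ℝ), Complex.exp (m * s) * g s with hGdef
  have hFder : ∀ x : ℝ, HasDerivAt F (Complex.exp (-(m * x)) * g x) x := fun x =>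
    intervalIntegral.integral_hasDerivAt_right (hc1.intervalIntegrable _ _)
      (hc1.stronglyMeasurableAtFilter _ _) hc1.continuousAt
  have hGder : ∀ x : ℝ, HasDerivAt G (-(Complex.exp (m * x) * g x)) x := fun x =>
    intervalIntegral.integral_hasDerivAt_left (hc2.intervalIntegrable _ _)
      (hc2.stronglyMeasurableAtFilter _ _) hc2.continuousAt
  -- vanishing of integrals over intervals where g = 0
  have hvan : ∀ (h : ℝ → ℂ) (a b : ℝ), a ≤ b → (∀ s : ℝ, a < s → s < b → g s = 0) →
      (∫ s in a..b, h s * g s) = 0 := by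
    intro h a b hab hz
    rw [intervalIntegral.integral_of_le hab, MeasureTheory.integral_Ioc_eq_integral_Ioo,
      MeasureTheory.setIntegral_congr_fun measurableSet_Ioo
        (show Set.EqOn (fun s => h s * g s) (fun _ => (0 : ℂ)) (Set.Ioo a b) from
          fun s hs => by simp only [hz s hs.1 hs.2, mul_zero])]
    simp
  have hnotin_right : ∀ s : ℝ, 1 < s → g s = 0 := fun s hs =>
    hg0 s (by simp only [Set.mem_Icc, not_and, not_le]; intro _; linarith)
  have hnotin_left : ∀ s : ℝ, s < -1 → g s = 0 := fun s hs =>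
    hg0 s (by simp only [Set.mem_Icc, not_and, not_le]; intro h; linarith)
  -- pointwise kernel splitting
  have hsplitF : ∀ x s : ℝ, s ≤ x → Complex.exp (m * ((|x - s| : ℝ) : ℂ)) * g s
      = Complex.exp (m * x) * (Complex.exp (-(m * s)) * g s) := by
    intro x s hs
    rw [abs_of_nonneg (by linarith), ← mul_assoc, ← Complex.exp_add]
    congr 2
    push_cast
    ring
  have hsplitG : ∀ x s : ℝ, x ≤ s → Complex.exp (m * ((|x - s| : ℝ) : ℂ)) * g s
      = Complex.exp (-(m * x)) * (Complex.exp (m * s) * g s) := by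
    intro x s hs
    rw [abs_of_nonpos (by linarith), ← mul_assoc, ← Complex.exp_add]
    congr 2
    push_cast
    ring
  -- key representation
  have key : ∀ x : ℝ, (∫ s in (-1 : ℝ)..1, Complex.exp (m * ((|x - s| : ℝ) : ℂ)) * g s)
      = Complex.exp (m * x) * F x + Complex.exp (-(m * x)) * G x := by
    intro x
    rcases le_or_gt x (-1) with hx | hx
    · -- x ≤ -1
      have h1 : (∫ s in (-1 : ℝ)..1, Complex.exp (m * ((|x - s| : ℝ) : ℂ)) * g s)
          = Complex.exp (-(m * x)) * ∫ s in (-1 : ℝ)..1, Complex.exp (m * s) * g s := by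
        rw [← intervalIntegral.integral_const_mul]
        apply intervalIntegral.integral_congr
        intro s hs
        rw [Set.uIcc_of_le (by norm_num : (-1 : ℝ) ≤ 1)] at hs
        exact hsplitG x s (le_trans hx hs.1)
      have hz : (∫ s in x..(-1 : ℝ), Complex.exp (m * s) * g s) = 0 :=
        hvan _ x (-1) hx (fun s _ hs2 => hnotin_left s hs2)
      have hzF : (∫ s in x..(-1 : ℝ), Complex.exp (-(m * s)) * g s) = 0 :=
        hvan _ x (-1) hx (fun s _ hs2 => hnotin_left s hs2)
      have hF0 : F x = 0 := by
        simp only [hFdef]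
        rw [intervalIntegral.integral_symm, hzF, neg_zero]
      have hG1 : G x = ∫ s in (-1 : ℝ)..1, Complex.exp (m * s) * g s := by
        simp only [hGdef]
        rw [← intervalIntegral.integral_add_adjacent_intervals
          (hc2.intervalIntegrable x (-1)) (hc2.intervalIntegrable (-1) 1), hz, zero_add]
      rw [h1, hF0, hG1]
      ring
    rcases le_or_gt x 1 with hx1 | hx1
    · -- -1 < x ≤ 1
      have hsplit := intervalIntegral.integral_add_adjacent_intervals
        ((hck x).intervalIntegrable (μ := volume) (-1) x)
        ((hck x).intervalIntegrable (μ := volume) x 1)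
      have e1 : (∫ s in (-1 : ℝ)..x, Complex.exp (m * ((|x - s| : ℝ) : ℂ)) * g s)
          = Complex.exp (m * x) * F x := by
        simp only [hFdef]
        rw [← intervalIntegral.integral_const_mul]
        apply intervalIntegral.integral_congr
        intro s hs
        rw [Set.uIcc_of_le (by linarith : (-1 : ℝ) ≤ x)] at hs
        exact hsplitF x s hs.2
      have e2 : (∫ s in x..(1 : ℝ), Complex.exp (m * ((|x - s| : ℝ) : ℂ)) * g s)
          = Complex.exp (-(m * x)) * G x := by
        simp only [hGdef]
        rw [← intervalIntegral.integral_const_mul]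
        apply intervalIntegral.integral_congr
        intro s hs
        rw [Set.uIcc_of_le hx1] at hs
        exact hsplitG x s hs.1
      rw [← hsplit, e1, e2]
    · -- 1 < x
      have h1 : (∫ s in (-1 : ℝ)..1, Complex.exp (m * ((|x - s| : ℝ) : ℂ)) * g s)
          = Complex.exp (m * x) * ∫ s in (-1 : ℝ)..1, Complex.exp (-(m * s)) * g s := by
        rw [← intervalIntegral.integral_const_mul]
        apply intervalIntegral.integral_congr
        intro s hs
        rw [Set.uIcc_of_le (by norm_num : (-1 : ℝ) ≤ 1)] at hs
        exact hsplitF x s (le_trans hs.2 hx1.le)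
      have hz : (∫ s in (1 : ℝ)..x, Complex.exp (m * s) * g s) = 0 :=
        hvan _ 1 x hx1.le (fun s hs1 _ => hnotin_right s hs1)
      have hzF : (∫ s in (1 : ℝ)..x, Complex.exp (-(m * s)) * g s) = 0 :=
        hvan _ 1 x hx1.le (fun s hs1 _ => hnotin_right s hs1)
      have hF1 : F x = ∫ s in (-1 : ℝ)..1, Complex.exp (-(m * s)) * g s := by
        simp only [hFdef]
        rw [← intervalIntegral.integral_add_adjacent_intervals
          (hc1.intervalIntegrable (-1) 1) (hc1.intervalIntegrable 1 x), hzF, add_zero]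
      have hG0 : G x = 0 := by
        simp only [hGdef]
        rw [intervalIntegral.integral_symm, hz, neg_zero]
      rw [h1, hF1, hG0]
      ring
  -- representation of u
  have hrep : ∀ x : ℝ, u x
      = 1 / (2 * m) * (Complex.exp (m * x) * F x + Complex.exp (-(m * x)) * G x) := by
    intro x
    have hcc : (1 : ℂ) / (2 * Complex.I * (lam : ℂ)) = 1 / (2 * m) := by rw [hm]; ring
    rw [hinteq x, hcc, ← key x]
  -- derivative facts
  have hlin : ∀ x : ℝ, HasDerivAt (fun y : ℝ => m * (y : ℂ)) m x := by
    intro x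
    simpa using (Complex.ofRealCLM.hasDerivAt (x := x)).const_mul m
  have hE : ∀ x : ℝ, HasDerivAt (fun y : ℝ => Complex.exp (m * y))
      (Complex.exp (m * x) * m) x := fun x => (hlin x).cexp
  have hE' : ∀ x : ℝ, HasDerivAt (fun y : ℝ => Complex.exp (-(m * y)))
      (Complex.exp (-(m * x)) * -m) x := fun x => ((hlin x).neg).cexp
  have hu' : ∀ x : ℝ, HasDerivAt u
      ((1 / 2 : ℂ) * (Complex.exp (m * x) * F x - Complex.exp (-(m * x)) * G x)) x := by
    intro x
    have hfun : u = fun y : ℝ => 1 / (2 * m) *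
        (Complex.exp (m * y) * F y + Complex.exp (-(m * y)) * G y) := funext hrep
    rw [hfun]
    have hv := (((hE x).mul (hFder x)).add ((hE' x).mul (hGder x))).const_mul (1 / (2 * m))
    refine hv.congr_deriv ?_
    symm
    field_simp
    ring
  have hd1 : deriv u = fun x : ℝ =>
      (1 / 2 : ℂ) * (Complex.exp (m * x) * F x - Complex.exp (-(m * x)) * G x) :=
    funext fun x => (hu' x).deriv
  have hprod : ∀ x : ℝ, Complex.exp (m * x) * Complex.exp (-(m * x)) = 1 := by
    intro x
    rw [← Complex.exp_add]
    simp
  have hrep' : ∀ x : ℝ, Complex.exp (m * x) * F x + Complex.exp (-(m * x)) * G x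
      = 2 * m * u x := by
    intro x
    rw [hrep x]
    field_simp
  have hu'' : ∀ x : ℝ, HasDerivAt (fun y : ℝ =>
      (1 / 2 : ℂ) * (Complex.exp (m * y) * F y - Complex.exp (-(m * y)) * G y))
      (-(lam : ℂ) ^ 2 * u x + g x) x := by
    intro x
    have hv := (((hE x).mul (hFder x)).sub ((hE' x).mul (hGder x))).const_mul (1 / 2 : ℂ)
    refine hv.congr_deriv ?_
    symm
    have h1 := hrep' x
    have h2 := hprod x
    have hI : Complex.I ^ 2 = -1 := Complex.I_sq
    rw [hm] at h1 h2 ⊢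
    linear_combination (-(Complex.I * (lam : ℂ)) / 2) * h1 + (-(g x)) * h2
      + (-(lam : ℂ) ^ 2 * u x) * hI
  have hdd : deriv (deriv u) = fun x : ℝ => -(lam : ℂ) ^ 2 * u x + g x := by
    rw [hd1]
    exact funext fun x => (hu'' x).deriv
  refine ⟨?_, ?_, ?_, ?_⟩
  · -- ContDiff 2
    have hdiffu : Differentiable ℝ u := fun x => (hu' x).differentiableAt
    have hdiffdu : Differentiable ℝ (deriv u) := by
      rw [hd1]
      exact fun x => (hu'' x).differentiableAt
    have hcontdd : Continuous (deriv (deriv u)) := by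
      rw [hdd]
      exact (continuous_const.mul hu).add hgc
    rw [show (2 : WithTop ℕ∞) = 1 + 1 from rfl, contDiff_succ_iff_deriv]
    refine ⟨hdiffu, by simp, contDiff_one_iff_deriv.mpr ⟨hdiffdu, hcontdd⟩⟩
  · -- ODE
    intro x
    rw [hdd]
    simp only [hgdef]
    ring
  · -- outgoing at +∞
    intro x hx
    have hG0 : G x = 0 := by
      simp only [hGdef]
      rw [intervalIntegral.integral_symm,
        hvan _ 1 x hx (fun s hs1 _ => hnotin_right s hs1), neg_zero]
    rw [(hu' x).deriv, hrep x, hG0]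
    rw [hm]
    field_simp [show (lam : ℂ) ≠ 0 by exact_mod_cast hlam.ne']
    ring
  · -- outgoing at -∞
    intro x hx
    have hF0 : F x = 0 := by
      simp only [hFdef]
      rw [intervalIntegral.integral_symm,
        hvan _ x (-1) hx (fun s _ hs2 => hnotin_left s hs2), neg_zero]
    rw [(hu' x).deriv, hrep x, hF0]
    rw [hm]
    field_simp [show (lam : ℂ) ≠ 0 by exact_mod_cast hlam.ne']
    ring
end
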